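/- arXiv:1604.02833 — 4 statements merged into one kernel-verified Lean document; each statement's English description precedes it below -/
import Mathlib

section
/- If d is a proper tree decomposition of a finite simple graph g, then bags(d) is an antichain with respect to set inclusion; that is, no bag of d is contained in a different bag of d. -/
open SimpleGraph

namespace TDAux
variable {T V : Type} {G : SimpleGraph T} {β : T → Set V} {B : Set V} {j : T}

open Classical in
noncomputable def fg (β : T → Set V) (B : Set V) : ∀ {a j : T}, G.Walk a j → T
  | a, _, .nil => a
  | a, _, .cons _ q => if β a = B then fg β B q else a

open Classical in
lemma fg_cons {a b : T} (r : G.Adj a b) (q : G.Walk b j) :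
    fg β B (Walk.cons r q) = if β a = B then fg β B q else a := rfl

lemma fg_nil {a : T} : fg β B (Walk.nil : G.Walk a a) = a := rfl

lemma fg_mem {a : T} (p : G.Walk a j) : fg β B p ∈ p.support := by
  induction p with
  | nil => rw [fg_nil]; exact Walk.start_mem_support _
  | cons r q ih =>
    rw [fg_cons]
    split_ifs with h
    · rw [Walk.support_cons]; exact List.mem_cons_of_mem _ ih
    · exact Walk.start_mem_support _

lemma fg_good {a : T} (p : G.Walk a j) (hj : β j ≠ B) : β (fg β B p) ≠ B := by
  induction p with
  | nil => exact hj
  | cons r q ih =>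
    rw [fg_cons]
    split_ifs with h
    · exact ih hj
    · exact h

lemma fg_of_good {a : T} (p : G.Walk a j) (ha : β a ≠ B) : fg β B p = a := by
  cases p with
  | nil => rfl
  | cons r q => rw [fg_cons, if_neg ha]

lemma master [DecidableEq T] {a : T} (p : G.Walk a j) (hp : p.IsPath) :
    ∃ (g : T) (s : G.Walk a g), g = fg β B p ∧
      ∀ z ∈ s.support, ∃ hz : z ∈ p.support,
        fg β B (p.dropUntil z hz) = fg β B p := by
  induction p with
  | nil =>
    refine ⟨_, Walk.nil, rfl, ?_⟩
    intro z hz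
    simp only [Walk.support_nil, List.mem_singleton] at hz
    subst hz
    refine ⟨Walk.start_mem_support _, ?_⟩
    have h1 : (Walk.nil : G.Walk z z).dropUntil z (Walk.start_mem_support _) = Walk.nil := by
      have := (hp.dropUntil (Walk.start_mem_support (Walk.nil : G.Walk z z)))
      exact Walk.isPath_iff_eq_nil.mp this
    rw [h1]
  | @cons u v w r q ih =>
    have hq : q.IsPath := hp.of_cons
    have hanq : u ∉ q.support := ((Walk.cons_isPath_iff r q).mp hp).2
    by_cases hba : β u = B
    · obtain ⟨g, s, hg, hs⟩ := ih hq
      refine ⟨g, Walk.cons r s, by rw [fg_cons, if_pos hba, hg], ?_⟩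
      intro z hz
      rw [Walk.support_cons, List.mem_cons] at hz
      rcases hz with rfl | hz
      · refine ⟨Walk.start_mem_support _, ?_⟩
        have : (Walk.cons r q).dropUntil z (Walk.start_mem_support _) = Walk.cons r q := by
          simp [Walk.dropUntil]
        rw [this]
      · obtain ⟨hzq, hfz⟩ := hs z hz
        have hzna : u ≠ z := fun h => hanq (h ▸ hzq)
        have hmem : z ∈ (Walk.cons r q).support := by
          rw [Walk.support_cons, List.mem_cons]; exact Or.inr hzq
        refine ⟨hmem, ?_⟩
        have hdrop : (Walk.cons r q).dropUntil z hmem = q.dropUntil z hzq := by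
          rw [Walk.dropUntil, dif_neg hzna]
        rw [hdrop, hfz, fg_cons, if_pos hba]
    · refine ⟨u, Walk.nil, by rw [fg_cons, if_neg hba], ?_⟩
      intro z hz
      simp only [Walk.support_nil, List.mem_singleton] at hz
      subst hz
      refine ⟨Walk.start_mem_support _, ?_⟩
      have : (Walk.cons r q).dropUntil z (Walk.start_mem_support _) = Walk.cons r q := by
        simp [Walk.dropUntil]
      rw [this]

end TDAux



open SimpleGraph

/-- A (candidate) tree decomposition: a finite tree together with a bag for each tree node. -/
structure TreeDecomp (V : Type) where
  T : Type
  tFinite : Finite T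
  tree : SimpleGraph T
  isTree : tree.IsTree
  β : T → Set V

/-- The set of bags of a tree decomposition. -/
def TreeDecomp.bags {V : Type} (d : TreeDecomp V) : Set (Set V) := Set.range d.β

/-- `d` is a tree decomposition of the graph `g`. -/
def IsTD {V : Type} (g : SimpleGraph V) (d : TreeDecomp V) : Prop :=
  (∀ v : V, ∃ i : d.T, v ∈ d.β i) ∧
  (∀ u v : V, g.Adj u v → ∃ i : d.T, u ∈ d.β i ∧ v ∈ d.β i) ∧
  (∀ (i j k : d.T) (p : d.tree.Walk i k),
    p.IsPath → j ∈ p.support → d.β i ∩ d.β k ⊆ d.β j)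

/-- `d' ⊑ d`: every bag of `d'` is contained in some bag of `d`. -/
def Subsumes {V : Type} (d' d : TreeDecomp V) : Prop :=
  ∀ b ∈ d'.bags, ∃ b' ∈ d.bags, b ⊆ b'

/-- `d'` strictly subsumes `d`. -/
def StrictlySubsumes {V : Type} (d' d : TreeDecomp V) : Prop :=
  Subsumes d' d ∧ ¬ d.bags ⊆ d'.bags

/-- `d` is a proper tree decomposition of `g`. -/
def IsProperTD {V : Type} (g : SimpleGraph V) (d : TreeDecomp V) : Prop :=
  IsTD g d ∧ ∀ d' : TreeDecomp V, IsTD g d' → ¬ StrictlySubsumes d' d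

/-- The graph obtained from `g` by saturating every bag of `d`. -/
def saturate {V : Type} (g : SimpleGraph V) (d : TreeDecomp V) : SimpleGraph V where
  Adj u v := g.Adj u v ∨ (u ≠ v ∧ ∃ i : d.T, u ∈ d.β i ∧ v ∈ d.β i)
  symm := by
    constructor
    intro u v h
    rcases h with h | ⟨hne, i, hu, hv⟩
    · exact Or.inl h.symm
    · exact Or.inr ⟨hne.symm, i, hv, hu⟩
  loopless := by
    constructor
    intro u h
    rcases h with h | ⟨hne, _⟩
    · exact g.loopless.irrefl u h
    · exact hne rfl

/-- A graph is chordal if every cycle of length greater than three has a chord,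
i.e. an edge joining two vertices of the cycle that are non-adjacent on the cycle. -/
def IsChordal {V : Type} (h : SimpleGraph V) : Prop :=
  ∀ (v : V) (c : h.Walk v v), c.IsCycle → 3 < c.length →
    ∃ u w : V, u ∈ c.support ∧ w ∈ c.support ∧ h.Adj u w ∧ s(u, w) ∉ c.edges

/-- The set of maximal cliques of `g`. -/
def MaxClq {V : Type} (g : SimpleGraph V) : Set (Set V) :=
  {C | g.IsClique C ∧ ∀ C' : Set V, g.IsClique C' → C ⊆ C' → C = C'}

/-- The set of minimal triangulations of `g` (chordal supergraphs on the same vertex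
set, minimal with respect to edge inclusion). -/
def MinTri {V : Type} (g : SimpleGraph V) : Set (SimpleGraph V) :=
  {h | g ≤ h ∧ IsChordal h ∧ ∀ h' : SimpleGraph V, g ≤ h' → h' < h → ¬ IsChordal h'}

/-- The bags of a proper tree decomposition form an antichain w.r.t. inclusion. -/
theorem proper_bags_antichain {V : Type} [Fintype V] (g : SimpleGraph V)
    (d : TreeDecomp V) (hd : IsProperTD g d) :
    ∀ b₁ ∈ d.bags, ∀ b₂ ∈ d.bags, b₁ ⊆ b₂ → b₁ = b₂ := by
  classical
  rintro b₁ ⟨i0, rfl⟩ b₂ ⟨j, rfl⟩ hsub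
  by_contra hne
  obtain ⟨⟨hvert, hedge, hcoh⟩, hproper⟩ := hd
  set B := d.β i0 with hB
  have hj : d.β j ≠ B := fun h => hne h.symm
  have huniq : ∀ u v : d.T, ∃! p : d.tree.Walk u v, p.IsPath := d.isTree.existsUnique_path
  let P : ∀ u v : d.T, d.tree.Walk u v := fun u v => (huniq u v).choose
  have hP : ∀ u v, (P u v).IsPath := fun u v => (huniq u v).choose_spec.1
  have hPu : ∀ u v (q : d.tree.Walk u v), q.IsPath → q = P u v :=
    fun u v q hq => (huniq u v).choose_spec.2 q hq
  let m : d.T → d.T := fun a => TDAux.fg d.β B (P a j)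
  have hm_good : ∀ a, d.β (m a) ≠ B := fun a => TDAux.fg_good _ hj
  have hm_self : ∀ a, d.β a ≠ B → m a = a := fun a ha => TDAux.fg_of_good _ ha
  have hm_mem : ∀ a, m a ∈ (P a j).support := fun a => TDAux.fg_mem _
  have hB_m : ∀ a, d.β a = B → B ⊆ d.β (m a) := by
    intro a ha x hx
    exact hcoh a (m a) j (P a j) (hP a j) (hm_mem a) ⟨ha ▸ hx, hsub hx⟩
  have hsub_m : ∀ a, d.β a ⊆ d.β (m a) := by
    intro a
    by_cases h : d.β a = B
    · rw [h]; exact hB_m a h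
    · rw [hm_self a h]
  let d' : TreeDecomp V :=
    { T := d.T, tFinite := d.tFinite, tree := d.tree, isTree := d.isTree,
      β := fun k => d.β (m k) }
  have hTD' : IsTD g d' := by
    refine ⟨?_, ?_, ?_⟩
    · intro v
      obtain ⟨i, hi⟩ := hvert v
      exact ⟨i, hsub_m i hi⟩
    · intro u v huv
      obtain ⟨i, hi1, hi2⟩ := hedge u v huv
      exact ⟨i, hsub_m i hi1, hsub_m i hi2⟩
    · intro a b c p hp hb x hx
      obtain ⟨ga, sa, hga, hsa⟩ := TDAux.master (β := d.β) (B := B) (P a j) (hP a j)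
      obtain ⟨gc, sc, hgc, hsc⟩ := TDAux.master (β := d.β) (B := B) (P c j) (hP c j)
      have hxa : x ∈ d.β ga := by rw [hga]; exact hx.1
      have hxc : x ∈ d.β gc := by rw [hgc]; exact hx.2
      have hxma : x ∈ d.β (m a) := hx.1
      have hxmc : x ∈ d.β (m c) := hx.2
      let W : d.tree.Walk a c := sa.append ((P ga gc).append sc.reverse)
      have hWs : ∀ z ∈ W.support, x ∈ d.β (m z) := by
        intro z hz
        rw [Walk.mem_support_append_iff] at hz
        rcases hz with hz | hz
        · obtain ⟨hz', hfz⟩ := hsa z hz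
          have hdp : (P a j).dropUntil z hz' = P z j :=
            hPu z j _ ((hP a j).dropUntil hz')
          have hmz : m z = m a := by
            show TDAux.fg d.β B (P z j) = TDAux.fg d.β B (P a j)
            rw [← hdp, hfz]
          rw [hmz]; exact hxma
        · rw [Walk.mem_support_append_iff] at hz
          rcases hz with hz | hz
          · have hxz : x ∈ d.β z :=
              hcoh ga z gc (P ga gc) (hP ga gc) hz ⟨hxa, hxc⟩
            by_cases hzB : d.β z = B
            · exact hB_m z hzB (hzB ▸ hxz)
            · rw [hm_self z hzB]; exact hxz
          · rw [Walk.support_reverse, List.mem_reverse] at hz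
            obtain ⟨hz', hfz⟩ := hsc z hz
            have hdp : (P c j).dropUntil z hz' = P z j :=
              hPu z j _ ((hP c j).dropUntil hz')
            have hmz : m z = m c := by
              show TDAux.fg d.β B (P z j) = TDAux.fg d.β B (P c j)
              rw [← hdp, hfz]
            rw [hmz]; exact hxmc
      have hpW : p = W.bypass := by
        rw [hPu a c p hp, hPu a c W.bypass W.bypass_isPath]
      have hbW : b ∈ W.support := W.support_bypass_subset (hpW ▸ hb)
      exact hWs b hbW
  refine hproper d' hTD' ⟨?_, ?_⟩
  · rintro bb ⟨k, rfl⟩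
    exact ⟨d.β (m k), ⟨m k, rfl⟩, subset_rfl⟩
  · intro hcon
    obtain ⟨k, hk⟩ := hcon ⟨i0, rfl⟩
    exact hm_good k hk
end

section
/- If d is a tree decomposition of a finite simple graph g, then saturate(g,d) is a triangulation of g; that is, saturate(g,d) is a chordal graph on V(g) whose edge set contains E(g). -/
open SimpleGraph

section AuxTD

open SimpleGraph Walk

variable {T : Type} {t : SimpleGraph T}

private lemma append_path_of_inter {X : Type} {G : SimpleGraph X} {i j k : X}
    {p : G.Walk i j} {q : G.Walk j k} (hp : p.IsPath) (hq : q.IsPath)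
    (h : ∀ y, y ∈ p.support → y ∈ q.support → y = j) : (p.append q).IsPath := by
  rw [Walk.isPath_def, Walk.support_append, List.nodup_append]
  refine ⟨hp.support_nodup, hq.support_nodup.tail, ?_⟩
  intro y hy1 y' hy2 hyy
  subst hyy
  have hyq : y ∈ q.support := List.mem_of_mem_tail hy2
  have hyj : y = j := h y hy1 hyq
  subst hyj
  have hnd := hq.support_nodup
  rw [q.support_eq_cons] at hnd
  exact (List.nodup_cons.mp hnd).1 hy2

private lemma path_length_eq (ht : t.IsTree) {i k : T} {p : t.Walk i k} (hp : p.IsPath) :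
    p.length = t.dist i k := by
  classical
  obtain ⟨w, hw⟩ := (ht.isConnected.preconnected i k).exists_walk_length_eq_dist
  have hb : w.bypass.length = t.dist i k :=
    le_antisymm (hw ▸ w.length_bypass_le) (t.dist_le _)
  have hpe : p = w.bypass := by
    have := ht.IsAcyclic.path_unique ⟨p, hp⟩ ⟨w.bypass, w.bypass_isPath⟩
    exact Subtype.ext_iff.mp this
  rw [hpe]; exact hb

private lemma exists_tree_path (ht : t.IsTree) (i k : T) : ∃ p : t.Walk i k, p.IsPath := by
  classical
  obtain ⟨w⟩ := ht.isConnected.preconnected i k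
  exact ⟨w.bypass, w.bypass_isPath⟩

private lemma btw_of_mem (ht : t.IsTree) {i j k : T} {p : t.Walk i k} (hp : p.IsPath)
    (hj : j ∈ p.support) : t.dist i j + t.dist j k = t.dist i k := by
  classical
  have h1 : (p.takeUntil j hj).length = t.dist i j := path_length_eq ht (hp.takeUntil hj)
  have h2 : (p.dropUntil j hj).length = t.dist j k := path_length_eq ht (hp.dropUntil hj)
  have h3 : (p.takeUntil j hj).length + (p.dropUntil j hj).length = p.length := by
    rw [← Walk.length_append, Walk.take_spec]
  rw [h1, h2, path_length_eq ht hp] at h3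
  exact h3

private lemma mem_of_btw (ht : t.IsTree) {i j k : T} {p : t.Walk i k} (hp : p.IsPath)
    (h : t.dist i j + t.dist j k = t.dist i k) : j ∈ p.support := by
  obtain ⟨p1, hp1⟩ := exists_tree_path ht i j
  obtain ⟨p2, hp2⟩ := exists_tree_path ht j k
  have hinter : ∀ y, y ∈ p1.support → y ∈ p2.support → y = j := by
    intro y h1 h2
    have e1 := btw_of_mem ht hp1 h1
    have e2 := btw_of_mem ht hp2 h2
    have tri : t.dist i k ≤ t.dist i y + t.dist y k :=
      ht.isConnected.dist_triangle (v := y)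
    have cyj : t.dist j y = t.dist y j := t.dist_comm
    have hz : t.dist y j = 0 := by omega
    exact (ht.isConnected.dist_eq_zero_iff.mp hz)
  have hap : (p1.append p2).IsPath := append_path_of_inter hp1 hp2 hinter
  have hpe : p = p1.append p2 := by
    have := ht.IsAcyclic.path_unique ⟨p, hp⟩ ⟨p1.append p2, hap⟩
    exact Subtype.ext_iff.mp this
  rw [hpe]
  exact (Walk.mem_support_append_iff p1 p2).mpr (Or.inl p1.end_mem_support)

variable {V : Type}

private lemma adj_bag {g : SimpleGraph V} {d : TreeDecomp V} (hd : IsTD g d) {u v : V}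
    (h : (saturate g d).Adj u v) : ∃ i, u ∈ d.β i ∧ v ∈ d.β i := by
  rcases h with h | ⟨_, i, hi⟩
  · exact hd.2.1 u v h
  · exact ⟨i, hi⟩

private lemma bag_btw {g : SimpleGraph V} {d : TreeDecomp V} (hd : IsTD g d) {v : V}
    {i j k : d.T} (hi : v ∈ d.β i) (hk : v ∈ d.β k)
    (h : d.tree.dist i j + d.tree.dist j k = d.tree.dist i k) : v ∈ d.β j := by
  obtain ⟨p, hp⟩ := exists_tree_path d.isTree i k
  exact hd.2.2 i j k p hp (mem_of_btw d.isTree hp h) ⟨hi, hk⟩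

private lemma top_btw {g : SimpleGraph V} {d : TreeDecomp V} (hd : IsTD g d) (r : d.T)
    (top : V → d.T) (htop1 : ∀ v, v ∈ d.β (top v))
    (htop2 : ∀ v j, v ∈ d.β j → d.tree.dist r (top v) ≤ d.tree.dist r j)
    {v : V} {x : d.T} (hx : v ∈ d.β x) :
    d.tree.dist x (top v) + d.tree.dist (top v) r = d.tree.dist x r := by
  have ht := d.isTree
  obtain ⟨p1, hp1⟩ := exists_tree_path ht x (top v)
  obtain ⟨p2, hp2⟩ := exists_tree_path ht (top v) r
  have hinter : ∀ y, y ∈ p1.support → y ∈ p2.support → y = top v := by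
    intro y h1 h2
    have hv : v ∈ d.β y := bag_btw hd hx (htop1 v) (btw_of_mem ht hp1 h1)
    have e2 := btw_of_mem ht hp2 h2
    have hmin := htop2 v y hv
    have c1 : d.tree.dist r (top v) = d.tree.dist (top v) r := d.tree.dist_comm
    have c2 : d.tree.dist r y = d.tree.dist y r := d.tree.dist_comm
    have hz : d.tree.dist (top v) y = 0 := by omega
    exact (ht.isConnected.dist_eq_zero_iff.mp hz).symm
  have hap := append_path_of_inter hp1 hp2 hinter
  have hlen := path_length_eq ht hap
  rw [Walk.length_append, path_length_eq ht hp1, path_length_eq ht hp2] at hlen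
  exact hlen

private lemma mem_top {g : SimpleGraph V} {d : TreeDecomp V} (hd : IsTD g d) (r : d.T)
    (top : V → d.T) (htop1 : ∀ v, v ∈ d.β (top v))
    (htop2 : ∀ v j, v ∈ d.β j → d.tree.dist r (top v) ≤ d.tree.dist r j)
    {u v : V} {x : d.T} (hux : u ∈ d.β x) (hvx : v ∈ d.β x)
    (hle : d.tree.dist r (top v) ≤ d.tree.dist r (top u)) : v ∈ d.β (top u) := by
  classical
  have ht := d.isTree
  have eu := top_btw hd r top htop1 htop2 hux
  have ev := top_btw hd r top htop1 htop2 hvx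
  obtain ⟨p, hp⟩ := exists_tree_path ht x r
  have hu' : top u ∈ p.support := mem_of_btw ht hp eu
  have hbtw : d.tree.dist x (top u) + d.tree.dist (top u) (top v) = d.tree.dist x (top v) := by
    have hv' : top v ∈ p.support := mem_of_btw ht hp ev
    rw [← Walk.take_spec p hu', Walk.mem_support_append_iff] at hv'
    have c1 : d.tree.dist r (top v) = d.tree.dist (top v) r := d.tree.dist_comm
    have c2 : d.tree.dist r (top u) = d.tree.dist (top u) r := d.tree.dist_comm
    rcases hv' with hv' | hv'
    · have e := btw_of_mem ht (hp.takeUntil hu') hv'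
      have c3 : d.tree.dist (top u) (top v) = d.tree.dist (top v) (top u) := d.tree.dist_comm
      omega
    · have e := btw_of_mem ht (hp.dropUntil hu') hv'
      omega
  exact bag_btw hd hvx (htop1 v) hbtw

end AuxTD

/-- `saturate g d` is a triangulation of `g`: a chordal graph on the vertices of `g`
whose edge set contains that of `g`. -/
theorem saturate_is_triangulation {V : Type} [Fintype V] (g : SimpleGraph V)
    (d : TreeDecomp V) (hd : IsTD g d) :
    g ≤ saturate g d ∧ IsChordal (saturate g d) := by
  classical
  refine ⟨fun u v h => Or.inl h, ?_⟩
  intro v0 c hc hlen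
  have ht := d.isTree
  have _inst : Finite d.T := d.tFinite
  obtain ⟨r⟩ : Nonempty d.T := ht.isConnected.nonempty
  have htop : ∀ v : V, ∃ i : d.T,
      v ∈ d.β i ∧ ∀ j, v ∈ d.β j → d.tree.dist r i ≤ d.tree.dist r j := by
    intro v
    obtain ⟨i0, hi0⟩ := hd.1 v
    obtain ⟨i, hi, hmin⟩ := Set.exists_min_image {j | v ∈ d.β j} (d.tree.dist r)
      (Set.toFinite _) ⟨i0, hi0⟩
    exact ⟨i, hi, hmin⟩
  choose top htop1 htop2 using htop
  -- pick the vertex of the cycle whose top is farthest from the root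
  have hsup : c.support.toFinset.Nonempty := ⟨v0, by simp⟩
  obtain ⟨u0, hu0s, hmax⟩ := Finset.exists_max_image c.support.toFinset
    (fun w => d.tree.dist r (top w)) hsup
  rw [List.mem_toFinset] at hu0s
  have hmax' : ∀ w ∈ c.support, d.tree.dist r (top w) ≤ d.tree.dist r (top u0) :=
    fun w hw => hmax w (List.mem_toFinset.mpr hw)
  -- rotate the cycle to start at u0
  set c' := c.rotate u0 hu0s with hc'def
  have hc' : c'.IsCycle := hc.rotate hu0s
  have hlc : c'.length = c.length := by
    have h := (Walk.rotate_edges c u0 hu0s).perm.length_eq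
    rwa [Walk.length_edges, Walk.length_edges] at h
  have hlen' : 3 < c'.length := hlc ▸ hlen
  have hsub : ∀ w, w ∈ c'.support → w ∈ c.support := by
    intro w hw
    rw [Walk.support_eq_cons] at hw
    rcases List.mem_cons.mp hw with rfl | hw
    · exact hu0s
    · exact List.mem_of_mem_tail ((Walk.support_rotate c u0 hu0s).mem_iff.mp hw)
  have hedge : ∀ e, e ∈ c.edges → e ∈ c'.edges :=
    fun e he => (Walk.rotate_edges c u0 hu0s).mem_iff.mpr he
  clear_value c'
  -- decompose c' = cons h1 (q.concat h2)
  obtain ⟨a0, hadj0, p, hpeq⟩ := Walk.not_nil_iff.mp hc'.not_nil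
  obtain ⟨b, q0, hadj2, heq2⟩ := Walk.exists_cons_eq_concat hadj0 p
  have hq0len : q0.length + 1 = c'.length := by
    rw [hpeq, heq2, Walk.length_concat]
  have hq0nil : ¬ q0.Nil := by
    rw [Walk.not_nil_iff_lt_length]; omega
  obtain ⟨a, hadj1, q, hqeq⟩ := Walk.not_nil_iff.mp hq0nil
  have E : c' = Walk.cons hadj1 (q.concat hadj2) := by
    rw [hpeq, heq2, hqeq, Walk.concat_cons]
  have hqlen : q.length + 2 = c'.length := by
    rw [E, Walk.length_cons, Walk.length_concat]
  -- support and path facts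
  have hsupE : c'.support = u0 :: (q.support ++ [u0]) := by
    rw [E, Walk.support_cons, Walk.support_concat]
  have htail : (q.support ++ [u0]).Nodup := by
    have := hc'.support_nodup
    rwa [hsupE] at this
  obtain ⟨hqnd, -, hdisj⟩ := List.nodup_append.mp htail
  have hu0q : u0 ∉ q.support := fun h => hdisj u0 h u0 (List.mem_singleton_self u0) rfl
  have hqpath : q.IsPath := (Walk.isPath_def q).mpr hqnd
  have hau0 : a ≠ u0 := fun h => hu0q (h ▸ q.start_mem_support)
  have hbu0 : b ≠ u0 := fun h => hu0q (h ▸ q.end_mem_support)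
  have hab : a ≠ b := by
    rintro rfl
    have hnil := (Walk.isPath_iff_eq_nil (p := q)).mp hqpath
    rw [hnil] at hqlen
    simp [Walk.length_nil] at hqlen
    omega
  -- a and b are in the original cycle's support
  have haC : a ∈ c.support := hsub a (by rw [hsupE]; simp [q.start_mem_support])
  have hbC : b ∈ c.support := hsub b (by rw [hsupE]; simp [q.end_mem_support])
  -- the chord s(a, b) is not an edge of c'
  have hnotedge : s(a, b) ∉ c'.edges := by
    rw [E, Walk.edges_cons, Walk.edges_concat, List.concat_eq_append]
    simp only [List.mem_cons, List.mem_append, List.mem_singleton]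
    push_neg
    refine ⟨?_, ?_, ?_⟩
    · intro h
      rcases Sym2.eq_iff.mp h with ⟨rfl, -⟩ | ⟨-, rfl⟩
      · exact hau0 rfl
      · exact hbu0 rfl
    · intro hmem
      cases q with
      | nil => simp at hmem
      | cons hac q2 =>
        rw [Walk.edges_cons, List.mem_cons] at hmem
        rcases hmem with h | h
        · rcases Sym2.eq_iff.mp h with ⟨-, rfl⟩ | ⟨rfl, -⟩
          · have hq2path : q2.IsPath := hqpath.of_cons
            have hnil := (Walk.isPath_iff_eq_nil (p := q2)).mp hq2path
            rw [hnil] at hqlen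
            simp [Walk.length_cons, Walk.length_nil] at hqlen
            omega
          · exact hac.ne rfl
        · have hmemsup : a ∈ q2.support := Walk.fst_mem_support_of_mem_edges q2 h
          exact ((Walk.cons_isPath_iff hac q2).mp hqpath).2 hmemsup
    · refine ⟨?_, by simp⟩
      intro h
      rcases Sym2.eq_iff.mp h with ⟨rfl, -⟩ | ⟨rfl, -⟩
      · exact hab rfl
      · exact hau0 rfl
  -- both a and b lie in the bag of top u0
  obtain ⟨x1, hu0x1, hax1⟩ := adj_bag hd hadj1
  obtain ⟨x2, hbx2, hu0x2⟩ := adj_bag hd hadj2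
  have ha : a ∈ d.β (top u0) :=
    mem_top hd r top htop1 htop2 hu0x1 hax1 (hmax' a haC)
  have hb : b ∈ d.β (top u0) :=
    mem_top hd r top htop1 htop2 hu0x2 hbx2 (hmax' b hbC)
  exact ⟨a, b, haC, hbC, Or.inr ⟨hab, top u0, ha, hb⟩,
    fun h => hnotedge (hedge _ h)⟩
end

section
/- If d is a proper tree decomposition of a chordal finite simple graph g, then bags(d) = MaxClq(g); that is, the set of bags of d is exactly the set of maximal cliques of g. -/
open SimpleGraph
open SimpleGraph.Walk

open SimpleGraph.Walk

section Aux
variable {V : Type} {T : Type}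

lemma aux_length_one_edge {G : SimpleGraph V} {u w : V} :
    ∀ (p : G.Walk u w), p.length = 1 → s(u, w) ∈ p.edges := by
  intro p hp
  cases p with
  | nil => simp at hp
  | cons h q =>
    cases q with
    | nil => simp
    | cons h' q' => simp [Walk.length_cons] at hp

lemma aux_shorter {G : SimpleGraph V} {x y : V} (p : G.Walk x y) (hnp : ¬ p.IsPath) :
    ∃ q : G.Walk x y, q.length < p.length ∧ ∀ z ∈ q.support, z ∈ p.support := by
  classical
  induction p with
  | nil => exact absurd Walk.IsPath.nil hnp
  | @cons x v y h q ih =>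
    by_cases hq : q.IsPath
    · have hxq : x ∈ q.support := by
        by_contra hx
        exact hnp ((Walk.cons_isPath_iff h q).mpr ⟨hq, hx⟩)
      refine ⟨q.dropUntil x hxq, ?_, ?_⟩
      · have := Walk.length_dropUntil_le q hxq
        simp only [Walk.length_cons]; omega
      · intro z hz
        have := Walk.support_dropUntil_subset q hxq hz
        simp [Walk.support_cons]
        tauto
    · obtain ⟨q', h1, h2⟩ := ih hq
      refine ⟨Walk.cons h q', ?_, ?_⟩
      · simp only [Walk.length_cons]; omega
      · intro z hz
        simp only [Walk.support_cons, List.mem_cons] at hz ⊢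
        rcases hz with rfl | hz
        · exact Or.inl rfl
        · exact Or.inr (h2 z hz)

lemma exists_min_path {G : SimpleGraph V} (P : V → Prop) {x y : V} (hxy : x ≠ y)
    (hnadj : ¬ G.Adj x y) (w0 : G.Walk x y) (hw0 : ∀ z ∈ w0.support, P z) :
    ∃ m : G.Walk x y, m.IsPath ∧ (∀ z ∈ m.support, P z) ∧ 2 ≤ m.length ∧
      ∀ u w, u ∈ m.support → w ∈ m.support → G.Adj u w → s(u, w) ∉ m.edges → False := by
  classical
  set L : Set ℕ := {n | ∃ p : G.Walk x y, (∀ z ∈ p.support, P z) ∧ p.length = n} with hL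
  have hLne : w0.length ∈ L := ⟨w0, hw0, rfl⟩
  obtain ⟨m, hmP, hml⟩ : ∃ p : G.Walk x y, (∀ z ∈ p.support, P z) ∧ p.length = sInf L :=
    Nat.sInf_mem (⟨_, hLne⟩ : L.Nonempty)
  have hmin : ∀ (p : G.Walk x y), (∀ z ∈ p.support, P z) → m.length ≤ p.length := by
    intro p hp
    rw [hml]
    exact Nat.sInf_le ⟨p, hp, rfl⟩
  have hpath : m.IsPath := by
    by_contra hnp
    obtain ⟨q, hql, hqs⟩ := aux_shorter m hnp
    exact absurd (hmin q fun z hz => hmP z (hqs z hz)) (by omega)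
  have h0 : m.length ≠ 0 := fun h => hxy (Walk.eq_of_length_eq_zero h)
  have h1 : m.length ≠ 1 := fun h => hnadj (Walk.adj_of_length_eq_one h)
  refine ⟨m, hpath, hmP, by omega, ?_⟩
  intro u w hu hw huw hedge
  have key : ∀ (u w : V) (A : G.Walk x u) (B : G.Walk u w) (C : G.Walk w y),
      A.append (B.append C) = m → G.Adj u w → s(u, w) ∉ m.edges → False := by
    intro u w A B C hm huw hedge
    have hlen : A.length + (B.length + C.length) = m.length := by
      rw [← hm]; simp [Walk.length_append]
    have hQ : ∀ z ∈ (A.append (Walk.cons huw C)).support, P z := by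
      intro z hz
      apply hmP
      rw [← hm]
      rw [Walk.mem_support_append_iff] at hz ⊢
      rcases hz with hz | hz
      · exact Or.inl hz
      · rw [Walk.support_cons] at hz
        rcases List.mem_cons.mp hz with rfl | hz
        · exact Or.inr (B.append C).start_mem_support
        · exact Or.inr (by rw [Walk.mem_support_append_iff]; exact Or.inr hz)
    have hle := hmin _ hQ
    have hlen2 : (A.append (Walk.cons huw C)).length = A.length + (C.length + 1) := by
      simp [Walk.length_append, Walk.length_cons]
    have hB : B.length ≤ 1 := by omega
    rcases Nat.le_one_iff_eq_zero_or_eq_one.mp hB with hB0 | hB1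
    · exact huw.ne (Walk.eq_of_length_eq_zero hB0)
    · apply hedge
      rw [← hm]
      have := aux_length_one_edge B hB1
      simp only [Walk.edges_append, List.mem_append]
      tauto
  classical
  have hsplit := Walk.take_spec m hu
  have hw' : w ∈ (m.takeUntil u hu).support ∨ w ∈ (m.dropUntil u hu).support := by
    rw [← Walk.mem_support_append_iff, hsplit]; exact hw
  rcases hw' with hw' | hw'
  · have hsp := Walk.take_spec (m.takeUntil u hu) hw'
    refine key w u ((m.takeUntil u hu).takeUntil w hw') ((m.takeUntil u hu).dropUntil w hw')
      (m.dropUntil u hu) ?_ huw.symm (by rwa [Sym2.eq_swap])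
    rw [Walk.append_assoc, hsp, hsplit]
  · have hsp := Walk.take_spec (m.dropUntil u hu) hw'
    refine key u w (m.takeUntil u hu) ((m.dropUntil u hu).takeUntil w hw')
      ((m.dropUntil u hu).dropUntil w hw') ?_ huw hedge
    rw [hsp, hsplit]

end Aux

section TreePart
variable {T : Type}

def PathClosed (t : SimpleGraph T) (A : Set T) : Prop :=
  ∀ ⦃i k : T⦄ (p : t.Walk i k), p.IsPath → i ∈ A → k ∈ A → ∀ j ∈ p.support, j ∈ A

lemma pathClosed_inter {t : SimpleGraph T} {A B : Set T} (hA : PathClosed t A)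
    (hB : PathClosed t B) : PathClosed t (A ∩ B) := by
  intro i k p hp hi hk j hj
  exact ⟨hA p hp hi.1 hk.1 j hj, hB p hp hi.2 hk.2 j hj⟩

lemma aux_loop_path_eq_nil {G : SimpleGraph T} {u : T} (p : G.Walk u u) (hp : p.IsPath) :
    p = Walk.nil := by
  cases p with
  | nil => rfl
  | cons h q =>
    exfalso
    rw [Walk.cons_isPath_iff] at hp
    exact hp.2 q.end_mem_support

lemma tree_adj_dichotomy {t : SimpleGraph T} (ht : t.IsTree) {x y c : T} (hadj : t.Adj x y)
    (px : t.Walk x c) (hpx : px.IsPath) (py : t.Walk y c) (hpy : py.IsPath) :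
    y ∈ px.support ∨ x ∈ py.support := by
  by_contra hcon
  push_neg at hcon
  have hyp : (Walk.cons hadj.symm px).IsPath := (Walk.cons_isPath_iff _ _).mpr ⟨hpx, hcon.1⟩
  obtain ⟨r, -, hr⟩ := ht.existsUnique_path y c
  have h1 := hr _ hyp
  have h2 := hr _ hpy
  apply hcon.2
  have hpy' : py = Walk.cons hadj.symm px := by rw [h2, h1]
  rw [hpy']
  simp [Walk.support_cons]

lemma tree_meet {t : SimpleGraph T} (ht : t.IsTree) {A B : Set T} (hA : PathClosed t A)
    (hB : PathClosed t B) (hAB : ∃ c, c ∈ A ∧ c ∈ B) :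
    ∀ {x y : T} (p : t.Walk x y), x ∈ B → y ∈ A → (∀ z ∈ p.support, z ∈ A ∨ z ∈ B) →
      ∃ m ∈ p.support, m ∈ A ∧ m ∈ B := by
  intro x y p
  induction p with
  | nil =>
    intro hx hy _
    refine ⟨_, ?_, hy, hx⟩
    simp
  | @cons x x₁ y h q ih =>
    intro hxB hyA hsup
    by_cases hxA : x ∈ A
    · exact ⟨x, by simp, hxA, hxB⟩
    by_cases hx1B : x₁ ∈ B
    · obtain ⟨m, hm, hmAB⟩ := ih hx1B hyA (fun z hz => hsup z (by simp [Walk.support_cons]; tauto))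
      exact ⟨m, by simp [Walk.support_cons]; tauto, hmAB⟩
    have hx1A : x₁ ∈ A := by
      rcases hsup x₁ (by simp [Walk.support_cons]) with h' | h'
      · exact h'
      · exact absurd h' hx1B
    exfalso
    obtain ⟨c0, hc0A, hc0B⟩ := hAB
    obtain ⟨px, hpx, -⟩ := ht.existsUnique_path x c0
    obtain ⟨py, hpy, -⟩ := ht.existsUnique_path x₁ c0
    rcases tree_adj_dichotomy ht h px hpx py hpy with hd | hd
    · exact hx1B (hB px hpx hxB hc0B _ hd)
    · exact hxA (hA py hpy hx1A hc0A _ hd)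

lemma tree_three_helly {t : SimpleGraph T} (ht : t.IsTree) {A B C : Set T}
    (hA : PathClosed t A) (hB : PathClosed t B) (hC : PathClosed t C)
    (hAB : ∃ c, c ∈ A ∧ c ∈ B) (hAC : ∃ c, c ∈ A ∧ c ∈ C) (hBC : ∃ c, c ∈ B ∧ c ∈ C) :
    ∃ m, m ∈ A ∧ m ∈ B ∧ m ∈ C := by
  classical
  obtain ⟨pab, hab1, hab2⟩ := hAB
  obtain ⟨pac, hac1, hac2⟩ := hAC
  obtain ⟨pbc, hbc1, hbc2⟩ := hBC
  obtain ⟨p1, hp1, -⟩ := ht.existsUnique_path pac pab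
  obtain ⟨p2, hp2, -⟩ := ht.existsUnique_path pab pbc
  have hp1A : ∀ z ∈ p1.support, z ∈ A := hA p1 hp1 hac1 hab1
  have hp2B : ∀ z ∈ p2.support, z ∈ B := hB p2 hp2 hab2 hbc1
  set w := (p1.append p2).bypass with hw
  have hwpath : w.IsPath := Walk.bypass_isPath _
  have hwAB : ∀ z ∈ w.support, z ∈ A ∨ z ∈ B := by
    intro z hz
    have := Walk.support_bypass_subset _ hz
    rw [Walk.mem_support_append_iff] at this
    rcases this with h' | h'
    · exact Or.inl (hp1A z h')
    · exact Or.inr (hp2B z h')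
  have hwC : ∀ z ∈ w.support, z ∈ C := hC w hwpath hac2 hbc2
  obtain ⟨m, hm, hmA, hmB⟩ := tree_meet ht hA hB ⟨pab, hab1, hab2⟩ w.reverse hbc1 hac1
    (by intro z hz; rw [Walk.support_reverse, List.mem_reverse] at hz; exact hwAB z hz)
  rw [Walk.support_reverse, List.mem_reverse] at hm
  exact ⟨m, hmA, hmB, hwC m hm⟩

lemma tree_helly {t : SimpleGraph T} (ht : t.IsTree) (F : Finset (Set T))
    (hPC : ∀ A ∈ F, PathClosed t A)
    (hpair : ∀ A ∈ F, ∀ B ∈ F, ∃ m, m ∈ A ∧ m ∈ B) :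
    ∃ m, ∀ A ∈ F, m ∈ A := by
  classical
  obtain ⟨n, hn⟩ : ∃ n, F.card = n := ⟨_, rfl⟩
  induction n using Nat.strong_induction_on generalizing F with
  | _ n ih =>
  rcases F.eq_empty_or_nonempty with rfl | ⟨A, hA⟩
  · exact ⟨ht.isConnected.nonempty.some, by simp⟩
  rcases (F.erase A).eq_empty_or_nonempty with he | ⟨X₀, hX₀⟩
  · obtain ⟨m, hm, -⟩ := hpair A hA A hA
    refine ⟨m, ?_⟩
    intro X hX
    have : X = A := by
      by_contra hne
      have : X ∈ F.erase A := Finset.mem_erase.mpr ⟨hne, hX⟩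
      simp [he] at this
    exact this ▸ hm
  · set G := (F.erase A).image (fun X => A ∩ X) with hG
    have hGcard : G.card < n := by
      rw [← hn]
      calc G.card ≤ (F.erase A).card := Finset.card_image_le
        _ < F.card := Finset.card_erase_lt_of_mem hA
    have hmemF : ∀ X ∈ F.erase A, X ∈ F := fun X hX => (Finset.mem_erase.mp hX).2
    obtain ⟨m, hm⟩ := ih G.card hGcard G
      (by
        intro B hB
        obtain ⟨X, hX, rfl⟩ := Finset.mem_image.mp hB
        exact pathClosed_inter (hPC A hA) (hPC X (hmemF X hX)))
      (by
        intro B1 hB1 B2 hB2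
        obtain ⟨X, hX, rfl⟩ := Finset.mem_image.mp hB1
        obtain ⟨Y, hY, rfl⟩ := Finset.mem_image.mp hB2
        obtain ⟨m, hmA, hmX, hmY⟩ := tree_three_helly ht (hPC A hA) (hPC X (hmemF X hX))
          (hPC Y (hmemF Y hY)) (hpair A hA X (hmemF X hX)) (hpair A hA Y (hmemF Y hY))
          (hpair X (hmemF X hX) Y (hmemF Y hY))
        exact ⟨m, ⟨hmA, hmX⟩, ⟨hmA, hmY⟩⟩)
      rfl
    refine ⟨m, ?_⟩
    intro X hX
    by_cases hXA : X = A
    · subst hXA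
      exact (hm _ (Finset.mem_image_of_mem _ hX₀)).1
    · exact (hm _ (Finset.mem_image_of_mem _ (Finset.mem_erase.mpr ⟨hXA, hX⟩))).2

end TreePart

section TDHelly

lemma clique_in_bag {V : Type} [Fintype V] {g : SimpleGraph V} (d : TreeDecomp V) (s : Set V)
    (h1 : ∀ v ∈ s, ∃ i, v ∈ d.β i)
    (h2 : ∀ u v : V, u ∈ s → v ∈ s → g.Adj u v → ∃ i, u ∈ d.β i ∧ v ∈ d.β i)
    (h3 : ∀ (i j k : d.T) (p : d.tree.Walk i k), p.IsPath → j ∈ p.support →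
      d.β i ∩ d.β k ⊆ d.β j)
    (C : Set V) (hC : g.IsClique C) (hCs : C ⊆ s) : ∃ i, C ⊆ d.β i := by
  classical
  have hfin : C.Finite := Set.toFinite C
  obtain ⟨m, hm⟩ := tree_helly d.isTree (hfin.toFinset.image (fun v => {i | v ∈ d.β i}))
    (by
      intro A hA
      obtain ⟨v, hv, rfl⟩ := Finset.mem_image.mp hA
      intro i k p hp hi hk j hj
      exact h3 i j k p hp hj ⟨hi, hk⟩)
    (by
      intro A hA B hB
      obtain ⟨v, hv, rfl⟩ := Finset.mem_image.mp hA
      obtain ⟨u, hu, rfl⟩ := Finset.mem_image.mp hB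
      rw [hfin.mem_toFinset] at hv hu
      by_cases huv : v = u
      · subst huv
        obtain ⟨i, hi⟩ := h1 v (hCs hv)
        exact ⟨i, hi, hi⟩
      · obtain ⟨i, hi1, hi2⟩ := h2 v u (hCs hv) (hCs hu) (hC hv hu huv)
        exact ⟨i, hi1, hi2⟩)
  refine ⟨m, ?_⟩
  intro v hv
  exact hm _ (Finset.mem_image_of_mem _ (hfin.mem_toFinset.mpr hv))

end TDHelly

section Components
variable {V : Type}

def WalkIn (g : SimpleGraph V) (s : Set V) (x y : V) : Prop :=
  ∃ p : g.Walk x y, ∀ z ∈ p.support, z ∈ s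

lemma WalkIn.refl {g : SimpleGraph V} {s : Set V} {x : V} (hx : x ∈ s) : WalkIn g s x x :=
  ⟨Walk.nil, by simpa⟩

lemma WalkIn.symm {g : SimpleGraph V} {s : Set V} {x y : V} (h : WalkIn g s x y) :
    WalkIn g s y x := by
  obtain ⟨p, hp⟩ := h
  refine ⟨p.reverse, ?_⟩
  intro z hz
  rw [Walk.support_reverse, List.mem_reverse] at hz
  exact hp z hz

lemma WalkIn.trans {g : SimpleGraph V} {s : Set V} {x y z : V} (h : WalkIn g s x y)
    (h' : WalkIn g s y z) : WalkIn g s x z := by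
  obtain ⟨p, hp⟩ := h
  obtain ⟨q, hq⟩ := h'
  refine ⟨p.append q, ?_⟩
  intro a ha
  rw [Walk.mem_support_append_iff] at ha
  rcases ha with ha | ha
  · exact hp a ha
  · exact hq a ha

lemma WalkIn.step {g : SimpleGraph V} {s : Set V} {x y z : V} (h : WalkIn g s x y)
    (hadj : g.Adj y z) (hz : z ∈ s) : WalkIn g s x z := by
  refine h.trans ⟨Walk.cons hadj Walk.nil, ?_⟩
  obtain ⟨p, hp⟩ := h
  intro a ha
  simp only [Walk.support_cons, Walk.support_nil, List.mem_cons, List.mem_singleton] at ha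
  rcases ha with rfl | ha
  · exact hp a p.end_mem_support
  · simp at ha
    exact ha ▸ hz

lemma comp_scan {g : SimpleGraph V} {s SS Comp : Set V} {u : V}
    (hstep : ∀ x ∈ Comp, ∀ z, z ∈ s → z ∉ SS → g.Adj x z → z ∈ Comp)
    (hCS : ∀ z ∈ Comp, z ∉ SS) (hu : u ∈ SS) :
    ∀ {c tt : V} (p : g.Walk c tt), c ∈ Comp →
      (∀ z ∈ p.support, z ∈ s ∧ (z ∉ SS ∨ z = u)) → u ∈ p.support →
      ∃ za ∈ Comp, g.Adj u za := by
  intro c tt p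
  induction p with
  | nil =>
    intro hc hsup hup
    simp only [Walk.support_nil, List.mem_singleton] at hup
    exact absurd hu (hup ▸ hCS _ hc)
  | @cons c c₁ tt h q ih =>
    intro hc hsup hup
    by_cases hc1 : c₁ = u
    · exact ⟨c, hc, (hc1 ▸ h).symm⟩
    · have hq1 : c₁ ∈ s ∧ (c₁ ∉ SS ∨ c₁ = u) := hsup c₁ (by simp [Walk.support_cons])
      have hc1Comp : c₁ ∈ Comp := hstep c hc c₁ hq1.1 (hq1.2.resolve_right hc1) h
      have hup' : u ∈ q.support := by
        simp only [Walk.support_cons, List.mem_cons] at hup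
        rcases hup with rfl | hup
        · exact absurd hu (hCS _ hc)
        · exact hup
      exact ih hc1Comp (fun z hz => hsup z (by simp [Walk.support_cons]; tauto)) hup'

lemma supp_in_comp {g : SimpleGraph V} {s SS Comp : Set V}
    (hstep : ∀ x ∈ Comp, ∀ z, z ∈ s → z ∉ SS → g.Adj x z → z ∈ Comp) :
    ∀ {c tt : V} (p : g.Walk c tt), c ∈ Comp → (∀ z ∈ p.support, z ∈ s ∧ z ∉ SS) →
      ∀ z ∈ p.support, z ∈ Comp := by
  intro c tt p
  induction p with
  | nil =>
    intro hc _ z hz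
    simp only [Walk.support_nil, List.mem_singleton] at hz
    exact hz ▸ hc
  | @cons c c₁ tt h q ih =>
    intro hc hsup z hz
    have hq1 : c₁ ∈ s ∧ c₁ ∉ SS := hsup c₁ (by simp [Walk.support_cons])
    have hc1Comp : c₁ ∈ Comp := hstep c hc c₁ hq1.1 hq1.2 h
    simp only [Walk.support_cons, List.mem_cons] at hz
    rcases hz with rfl | hz
    · exact hc
    · exact ih hc1Comp (fun z hz => hsup z (by simp [Walk.support_cons]; tauto)) z hz

end Components

section Separator
variable {V : Type}

lemma sep_structure [Fintype V] {g : SimpleGraph V} (hg : IsChordal g)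
    (s : Finset V) {a b : V} (ha : a ∈ s) (hb : b ∈ s) (hab : a ≠ b) (hnadj : ¬ g.Adj a b) :
    ∃ (S : Finset V) (Ca Cb : Set V),
      (∀ x ∈ S, x ∈ s) ∧ a ∉ S ∧ b ∉ S ∧ a ∈ Ca ∧ b ∈ Cb ∧
      (∀ x ∈ Ca, x ∈ s ∧ x ∉ S) ∧ (∀ x ∈ Cb, x ∈ s ∧ x ∉ S) ∧
      (∀ x ∈ Ca, x ∉ Cb) ∧
      (∀ x ∈ Ca, ∀ z, z ∈ s → z ∉ S → g.Adj x z → z ∈ Ca) ∧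
      (∀ x ∈ Cb, ∀ z, z ∈ s → z ∉ S → g.Adj x z → z ∈ Cb) ∧
      (∀ x ∈ Ca, ∀ y ∈ Cb, ¬ g.Adj x y) ∧
      (∀ x ∈ S, ∀ y ∈ S, x ≠ y → g.Adj x y) := by
  classical
  set Sep : Finset V → Prop := fun S =>
    (∀ x ∈ S, x ∈ s) ∧ a ∉ S ∧ b ∉ S ∧ ¬ WalkIn g {z | z ∈ s ∧ z ∉ S} a b with hSepDef
  have hSep0 : Sep ((s.erase a).erase b) := by
    refine ⟨?_, ?_, ?_, ?_⟩
    · intro x hx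
      exact Finset.mem_of_mem_erase (Finset.mem_of_mem_erase hx)
    · intro hx
      exact (Finset.mem_erase.mp (Finset.mem_of_mem_erase hx)).1 rfl
    · intro hx
      exact (Finset.mem_erase.mp hx).1 rfl
    · rintro ⟨p, hp⟩
      cases p with
      | nil => exact hab rfl
      | @cons a c b' h q =>
        have hc : c ∈ s ∧ c ∉ (s.erase a).erase b :=
          hp c (by simp [Walk.support_cons])
        have hcb : c = b ∨ c = a := by
          rcases hc with ⟨hcs, hcer⟩
          by_cases h1 : c = b
          · exact Or.inl h1
          by_cases h2 : c = a
          · exact Or.inr h2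
          exact absurd (Finset.mem_erase.mpr ⟨h1, Finset.mem_erase.mpr ⟨h2, hcs⟩⟩) hcer
        rcases hcb with rfl | rfl
        · exact hnadj h
        · exact h.ne rfl
  obtain ⟨S, hS, hcard⟩ : ∃ S, Sep S ∧ S.card = sInf {k | ∃ S, Sep S ∧ S.card = k} :=
    Nat.sInf_mem (⟨_, _, hSep0, rfl⟩ : {k | ∃ S, Sep S ∧ S.card = k}.Nonempty)
  have hminS : ∀ S', Sep S' → S.card ≤ S'.card := by
    intro S' h
    rw [hcard]
    exact Nat.sInf_le ⟨S', h, rfl⟩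
  obtain ⟨hSs, haS, hbS, hSab⟩ := hS
  set D : Set V := {z | z ∈ s ∧ z ∉ S} with hD
  set Ca : Set V := {x | x ∈ s ∧ x ∉ S ∧ WalkIn g D a x} with hCa
  set Cb : Set V := {x | x ∈ s ∧ x ∉ S ∧ WalkIn g D b x} with hCb
  have haCa : a ∈ Ca := ⟨ha, haS, WalkIn.refl ⟨ha, haS⟩⟩
  have hbCb : b ∈ Cb := ⟨hb, hbS, WalkIn.refl ⟨hb, hbS⟩⟩
  have hstepCa : ∀ x ∈ Ca, ∀ z, z ∈ s → z ∉ S → g.Adj x z → z ∈ Ca := by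
    intro x hx z hz hzS hadj
    exact ⟨hz, hzS, hx.2.2.step hadj ⟨hz, hzS⟩⟩
  have hstepCb : ∀ x ∈ Cb, ∀ z, z ∈ s → z ∉ S → g.Adj x z → z ∈ Cb := by
    intro x hx z hz hzS hadj
    exact ⟨hz, hzS, hx.2.2.step hadj ⟨hz, hzS⟩⟩
  have hdisj : ∀ x ∈ Ca, x ∉ Cb := by
    intro x hx hx'
    exact hSab (hx.2.2.trans hx'.2.2.symm)
  have hCaS : ∀ x ∈ Ca, x ∈ s ∧ x ∉ S := fun x hx => ⟨hx.1, hx.2.1⟩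
  have hCbS : ∀ x ∈ Cb, x ∈ s ∧ x ∉ S := fun x hx => ⟨hx.1, hx.2.1⟩
  have hcross : ∀ x ∈ Ca, ∀ y ∈ Cb, ¬ g.Adj x y := by
    intro x hx y hy hadj
    exact hdisj y (hstepCa x hx y hy.1 hy.2.1 hadj) hy
  refine ⟨S, Ca, Cb, hSs, haS, hbS, haCa, hbCb, hCaS, hCbS, hdisj, hstepCa, hstepCb, hcross, ?_⟩
  -- S is a clique
  intro x hxS y hyS hne
  by_contra hnxy
  -- every separator vertex has neighbors in both components
  have nbr : ∀ u ∈ S, (∃ za ∈ Ca, g.Adj u za) ∧ (∃ zb ∈ Cb, g.Adj u zb) := by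
    intro u huS
    have hclt : (S.erase u).card < S.card := Finset.card_erase_lt_of_mem huS
    have hnsep : ¬ Sep (S.erase u) := by
      intro h
      exact absurd (hminS _ h) (by omega)
    have hwalk : WalkIn g {z | z ∈ s ∧ z ∉ S.erase u} a b := by
      by_contra hw
      exact hnsep ⟨fun x hx => hSs x (Finset.mem_of_mem_erase hx),
        fun h => haS (Finset.mem_of_mem_erase h), fun h => hbS (Finset.mem_of_mem_erase h), hw⟩
    obtain ⟨p, hp⟩ := hwalk
    have hup : u ∈ p.support := by
      by_contra hu
      apply hSab
      refine ⟨p, ?_⟩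
      intro z hz
      have hz' := hp z hz
      refine ⟨hz'.1, ?_⟩
      intro hzS
      exact hz'.2 (Finset.mem_erase.mpr ⟨fun h => hu (h ▸ hz), hzS⟩)
    have hsup' : ∀ z ∈ p.support, z ∈ (↑s : Set V) ∧ (z ∉ (↑S : Set V) ∨ z = u) := by
      intro z hz
      have hz' := hp z hz
      refine ⟨hz'.1, ?_⟩
      by_cases hzu : z = u
      · exact Or.inr hzu
      · exact Or.inl (fun hzS => hz'.2 (Finset.mem_erase.mpr ⟨hzu, hzS⟩))
    constructor
    · exact comp_scan (SS := (↑S : Set V)) (fun x hx z hz hzS hadj => hstepCa x hx z hz hzS hadj)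
        (fun z hz => (hCaS z hz).2) huS p haCa hsup' hup
    · refine comp_scan (SS := (↑S : Set V)) (fun x hx z hz hzS hadj => hstepCb x hx z hz hzS hadj)
        (fun z hz => (hCbS z hz).2) huS p.reverse hbCb ?_ ?_
      · intro z hz
        rw [Walk.support_reverse, List.mem_reverse] at hz
        exact hsup' z hz
      · rw [Walk.support_reverse, List.mem_reverse]
        exact hup
  obtain ⟨⟨xa, hxa, hxxa⟩, ⟨xb, hxb, hxxb⟩⟩ := nbr x hxS
  obtain ⟨⟨ya, hya, hyya⟩, ⟨yb, hyb, hyyb⟩⟩ := nbr y hyS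
  -- connectivity inside components
  have hconn : ∀ (Cc : Set V), (∀ x ∈ Cc, ∀ z, z ∈ s → z ∉ S → g.Adj x z → z ∈ Cc) →
      ∀ r, r ∈ Cc → (∀ x1, x1 ∈ Cc → WalkIn g D r x1) →
      ∀ x1 ∈ Cc, ∀ x2 ∈ Cc, ∃ p : g.Walk x1 x2, ∀ z ∈ p.support, z ∈ Cc := by
    intro Cc hstep r hr hreach x1 h1 x2 h2
    obtain ⟨p1, hp1⟩ := hreach x1 h1
    obtain ⟨p2, hp2⟩ := hreach x2 h2
    refine ⟨p1.reverse.append p2, ?_⟩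
    intro z hz
    rw [Walk.mem_support_append_iff] at hz
    rcases hz with hz | hz
    · rw [Walk.support_reverse, List.mem_reverse] at hz
      exact supp_in_comp (s := (↑s : Set V)) (SS := (↑S : Set V)) hstep p1 hr
        (fun z hz => ⟨(hp1 z hz).1, (hp1 z hz).2⟩) z hz
    · exact supp_in_comp (s := (↑s : Set V)) (SS := (↑S : Set V)) hstep p2 hr
        (fun z hz => ⟨(hp2 z hz).1, (hp2 z hz).2⟩) z hz
  have hwalka : ∃ p : g.Walk xa ya, ∀ z ∈ p.support, z ∈ Ca :=
    hconn Ca hstepCa a haCa (fun x1 h1 => h1.2.2) xa hxa ya hya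
  have hwalkb : ∃ p : g.Walk xb yb, ∀ z ∈ p.support, z ∈ Cb :=
    hconn Cb hstepCb b hbCb (fun x1 h1 => h1.2.2) xb hxb yb hyb
  obtain ⟨wa, hwa⟩ := hwalka
  obtain ⟨wb, hwb⟩ := hwalkb
  -- minimal x-y path through Ca
  have hm := exists_min_path (fun z => z ∈ Ca ∨ z = x ∨ z = y) hne hnxy
    (Walk.cons hxxa (wa.concat hyya.symm))
    (by
      intro z hz
      simp only [Walk.support_cons, List.mem_cons] at hz
      rcases hz with rfl | hz
      · exact Or.inr (Or.inl rfl)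
      · simp only [Walk.support_concat, List.concat_eq_append, List.mem_append,
          List.mem_singleton] at hz
        rcases hz with hz | rfl
        · exact Or.inl (hwa z hz)
        · exact Or.inr (Or.inr rfl))
  obtain ⟨m, hmpath, hmP, hmlen, hmchord⟩ := hm
  have hm' := exists_min_path (fun z => z ∈ Cb ∨ z = y ∨ z = x) (Ne.symm hne)
    (fun h => hnxy h.symm) (Walk.cons hyyb (wb.reverse.concat hxxb.symm))
    (by
      intro z hz
      simp only [Walk.support_cons, List.mem_cons] at hz
      rcases hz with rfl | hz
      · exact Or.inr (Or.inl rfl)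
      · simp only [Walk.support_concat, List.concat_eq_append, List.mem_append,
          List.mem_singleton] at hz
        rcases hz with hz | rfl
        · rw [Walk.support_reverse, List.mem_reverse] at hz
          exact Or.inl (hwb z hz)
        · exact Or.inr (Or.inr rfl))
  obtain ⟨m', hmpath', hmP', hmlen', hmchord'⟩ := hm'
  -- x and y are not in the components
  have hxCa : x ∉ Ca := fun h => (hCaS x h).2 hxS
  have hyCa : y ∉ Ca := fun h => (hCaS y h).2 hyS
  have hxCb : x ∉ Cb := fun h => (hCbS x h).2 hxS
  have hyCb : y ∉ Cb := fun h => (hCbS y h).2 hyS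
  have hcrossmem : ∀ z, z ∈ m.support → z ∈ m'.support → z = x ∨ z = y := by
    intro z hz hz'
    rcases hmP z hz with hz1 | hz1 | hz1
    · rcases hmP' z hz' with hz2 | hz2 | hz2
      · exact absurd hz2 (hdisj z hz1)
      · exact Or.inr hz2
      · exact Or.inl hz2
    · exact Or.inl hz1
    · exact Or.inr hz1
  -- build the cycle
  set c : g.Walk x x := m.append m' with hc
  have hxm : x ∈ m.support := m.start_mem_support
  have hym : y ∈ m.support := m.end_mem_support
  have hym' : y ∈ m'.support := m'.start_mem_support
  have hxm' : x ∈ m'.support := m'.end_mem_support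
  have hcyc : c.IsCycle := by
    rw [Walk.isCycle_def]
    refine ⟨⟨?_⟩, ?_, ?_⟩
    · rw [Walk.edges_append]
      refine List.Nodup.append hmpath.edges_nodup hmpath'.edges_nodup ?_
      intro e he he'
      induction e using Sym2.ind with
      | _ u1 u2 =>
        have h1 : u1 ∈ m.support := m.fst_mem_support_of_mem_edges he
        have h2 : u2 ∈ m.support := m.snd_mem_support_of_mem_edges he
        have h1' : u1 ∈ m'.support := m'.fst_mem_support_of_mem_edges he'
        have h2' : u2 ∈ m'.support := m'.snd_mem_support_of_mem_edges he'
        have hadj : g.Adj u1 u2 := m.adj_of_mem_edges he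
        rcases hcrossmem u1 h1 h1' with rfl | rfl <;> rcases hcrossmem u2 h2 h2' with rfl | rfl
        · exact hadj.ne rfl
        · exact hnxy hadj
        · exact hnxy hadj.symm
        · exact hadj.ne rfl
    · intro hnil
      have := congrArg Walk.length hnil
      rw [Walk.length_append, Walk.length_nil] at this
      omega
    · rw [Walk.tail_support_append]
      have hxtail : x ∉ m.support.tail := by
        have := hmpath.support_nodup
        rw [m.support_eq_cons] at this
        exact (List.nodup_cons.mp this).1
      have hytail : y ∉ m'.support.tail := by
        have := hmpath'.support_nodup
        rw [m'.support_eq_cons] at this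
        exact (List.nodup_cons.mp this).1
      refine List.Nodup.append (hmpath.support_nodup.tail) (hmpath'.support_nodup.tail) ?_
      intro z hz hz'
      rcases hcrossmem z (List.mem_of_mem_tail hz) (List.mem_of_mem_tail hz') with rfl | rfl
      · exact hxtail hz
      · exact hytail hz'
  have hclen : 3 < c.length := by
    rw [hc, Walk.length_append]
    omega
  obtain ⟨u, w, hu, hw, huw, hedges⟩ := hg x c hcyc hclen
  rw [hc, Walk.mem_support_append_iff] at hu hw
  rw [hc, Walk.edges_append] at hedges
  have hnm : s(u, w) ∉ m.edges := fun h => hedges (List.mem_append.mpr (Or.inl h))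
  have hnm' : s(u, w) ∉ m'.edges := fun h => hedges (List.mem_append.mpr (Or.inr h))
  by_cases hum : u ∈ m.support
  · by_cases hwm : w ∈ m.support
    · exact hmchord u w hum hwm huw hnm
    · have hwm' : w ∈ m'.support := hw.resolve_left hwm
      by_cases hum' : u ∈ m'.support
      · exact hmchord' u w hum' hwm' huw hnm'
      · have huCa : u ∈ Ca := by
          rcases hmP u hum with h | rfl | rfl
          · exact h
          · exact absurd hxm' hum'
          · exact absurd hym' hum'
        have hwCb : w ∈ Cb := by
          rcases hmP' w hwm' with h | rfl | rfl
          · exact h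
          · exact absurd hym hwm
          · exact absurd hxm hwm
        exact hcross u huCa w hwCb huw
  · have hum' : u ∈ m'.support := hu.resolve_left hum
    by_cases hwm' : w ∈ m'.support
    · exact hmchord' u w hum' hwm' huw hnm'
    · have hwm : w ∈ m.support := hw.resolve_right hwm'
      have hwCa : w ∈ Ca := by
        rcases hmP w hwm with h | rfl | rfl
        · exact h
        · exact absurd hxm' hwm'
        · exact absurd hym' hwm'
      have huCb : u ∈ Cb := by
        rcases hmP' u hum' with h | rfl | rfl
        · exact h
        · exact absurd hym hum
        · exact absurd hxm hum
      exact hcross w hwCa u huCb huw.symm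

end Separator

section Dirac
variable {V : Type}

def SimpIn (g : SimpleGraph V) (s : Set V) (v : V) : Prop :=
  v ∈ s ∧ ∀ ⦃u w : V⦄, u ∈ s → w ∈ s → g.Adj v u → g.Adj v w → u ≠ w → g.Adj u w

lemma dirac [Fintype V] {g : SimpleGraph V} (hg : IsChordal g) :
    ∀ (n : ℕ) (s : Finset V), s.card ≤ n →
      (∀ x ∈ s, ∀ y ∈ s, x ≠ y → g.Adj x y) ∨
      ∃ x ∈ s, ∃ y ∈ s, x ≠ y ∧ ¬ g.Adj x y ∧ SimpIn g ↑s x ∧ SimpIn g ↑s y := by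
  classical
  intro n
  induction n with
  | zero =>
    intro s hs
    left
    intro x hx
    have hse : s = ∅ := Finset.card_eq_zero.mp (le_antisymm hs (Nat.zero_le _))
    simp [hse] at hx
  | succ n ih =>
    intro s hs
    by_cases hcomp : ∀ x ∈ s, ∀ y ∈ s, x ≠ y → g.Adj x y
    · exact Or.inl hcomp
    push_neg at hcomp
    obtain ⟨a, ha, b, hb, hab, hnadj⟩ := hcomp
    obtain ⟨S, Ca, Cb, hSs, haS, hbS, haCa, hbCb, hCaS, hCbS, hdisj, hstepCa, hstepCb,
      hcross, hSclq⟩ := sep_structure hg s ha hb hab hnadj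
    have side : ∀ (Cc : Set V) (r : V), r ∈ Cc → (∀ x ∈ Cc, x ∈ s ∧ x ∉ S) →
        (∀ x ∈ Cc, ∀ z, z ∈ s → z ∉ S → g.Adj x z → z ∈ Cc) →
        (∃ t ∈ s, t ∉ Cc ∧ t ∉ S) →
        ∃ x ∈ Cc, SimpIn g ↑s x := by
      intro Cc r hr hCS hstep hext
      obtain ⟨t, hts, htC, htS⟩ := hext
      set s₂ : Finset V := s.filter (fun z => z ∈ Cc ∨ z ∈ S) with hs₂
      have hsub2 : ∀ z, z ∈ s₂ ↔ z ∈ s ∧ (z ∈ Cc ∨ z ∈ S) := by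
        intro z; simp [hs₂]
      have hnbr : ∀ x ∈ Cc, ∀ u, u ∈ s → g.Adj x u → u ∈ s₂ := by
        intro x hx u hu hadj
        rcases em (u ∈ S) with h | h
        · exact (hsub2 u).mpr ⟨hu, Or.inr h⟩
        · exact (hsub2 u).mpr ⟨hu, Or.inl (hstep x hx u hu h hadj)⟩
      have hcard2 : s₂.card ≤ n := by
        have hss : s₂ ⊆ s.erase t := by
          intro z hz
          rw [hsub2 z] at hz
          refine Finset.mem_erase.mpr ⟨?_, hz.1⟩
          rintro rfl
          rcases hz.2 with h | h
          · exact htC h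
          · exact htS h
        have h1 := Finset.card_le_card hss
        have h2 := Finset.card_erase_of_mem hts
        have h3 : 0 < s.card := Finset.card_pos.mpr ⟨t, hts⟩
        omega
      have hlift : ∀ x ∈ Cc, SimpIn g ↑s₂ x → SimpIn g ↑s x := by
        intro x hx hsimp
        refine ⟨(hCS x hx).1, ?_⟩
        intro u w hu hw hxu hxw hne
        exact hsimp.2 (Finset.mem_coe.mpr (hnbr x hx u (Finset.mem_coe.mp hu) hxu))
          (Finset.mem_coe.mpr (hnbr x hx w (Finset.mem_coe.mp hw) hxw)) hxu hxw hne
      rcases ih s₂ hcard2 with hcomp2 | ⟨x1, h1, x2, h2, hne12, hnadj12, hsimp1, hsimp2⟩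
      · refine ⟨r, hr, hlift r hr ⟨?_, ?_⟩⟩
        · exact Finset.mem_coe.mpr ((hsub2 r).mpr ⟨(hCS r hr).1, Or.inl hr⟩)
        · intro u w hu hw _ _ hne
          exact hcomp2 u (Finset.mem_coe.mp hu) w (Finset.mem_coe.mp hw) hne
      · have hor : x1 ∈ Cc ∨ x2 ∈ Cc := by
          by_contra hcon
          push_neg at hcon
          have hx1S : x1 ∈ S := ((hsub2 x1).mp h1).2.resolve_left hcon.1
          have hx2S : x2 ∈ S := ((hsub2 x2).mp h2).2.resolve_left hcon.2
          exact hnadj12 (hSclq x1 hx1S x2 hx2S hne12)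
        rcases hor with h | h
        · exact ⟨x1, h, hlift x1 h hsimp1⟩
        · exact ⟨x2, h, hlift x2 h hsimp2⟩
    obtain ⟨x, hxCa, hxsimp⟩ := side Ca a haCa hCaS hstepCa
      ⟨b, hb, fun h => hdisj b h hbCb, hbS⟩
    obtain ⟨y, hyCb, hysimp⟩ := side Cb b hbCb hCbS hstepCb
      ⟨a, ha, fun h => hdisj a haCa h, haS⟩
    right
    refine ⟨x, (hCaS x hxCa).1, y, (hCbS y hyCb).1, ?_, hcross x hxCa y hyCb, hxsimp, hysimp⟩
    rintro rfl
    exact hdisj x hxCa hyCb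

end Dirac

section AddLeaf
variable {T : Type}

def addLeaf (t : SimpleGraph T) (i₀ : T) : SimpleGraph (Option T) where
  Adj a b := (∃ i j, a = some i ∧ b = some j ∧ t.Adj i j) ∨ (a = none ∧ b = some i₀) ∨
    (a = some i₀ ∧ b = none)
  symm := by
    constructor
    rintro a b (⟨i, j, rfl, rfl, h⟩ | ⟨rfl, rfl⟩ | ⟨rfl, rfl⟩)
    · exact Or.inl ⟨j, i, rfl, rfl, h.symm⟩
    · exact Or.inr (Or.inr ⟨rfl, rfl⟩)
    · exact Or.inr (Or.inl ⟨rfl, rfl⟩)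
  loopless := by
    constructor
    rintro a (⟨i, j, rfl, h1, h⟩ | ⟨rfl, h⟩ | ⟨rfl, h⟩)
    · simp only [Option.some.injEq] at h1
      subst h1
      exact h.ne rfl
    · cases h
    · cases h

lemma addLeaf_adj_some {t : SimpleGraph T} {i₀ : T} {i j : T} :
    (addLeaf t i₀).Adj (some i) (some j) ↔ t.Adj i j := by
  constructor
  · rintro (⟨i', j', h1, h2, h⟩ | ⟨h, -⟩ | ⟨-, h⟩)
    · simp only [Option.some.injEq] at h1 h2
      subst h1; subst h2
      exact h
    · cases h
    · cases h
  · exact fun h => Or.inl ⟨i, j, rfl, rfl, h⟩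

lemma addLeaf_adj_none {t : SimpleGraph T} {i₀ : T} {b : Option T} :
    (addLeaf t i₀).Adj none b ↔ b = some i₀ := by
  constructor
  · rintro (⟨i', j', h1, -, -⟩ | ⟨-, h⟩ | ⟨h, -⟩)
    · cases h1
    · exact h
    · cases h
  · rintro rfl
    exact Or.inr (Or.inl ⟨rfl, rfl⟩)

def someHom (t : SimpleGraph T) (i₀ : T) : t →g addLeaf t i₀ :=
  ⟨Option.some, fun h => Or.inl ⟨_, _, rfl, rfl, h⟩⟩

lemma addLeaf_connected {t : SimpleGraph T} {i₀ : T} (ht : t.Connected) :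
    (addLeaf t i₀).Connected := by
  rw [connected_iff]
  refine ⟨?_, ⟨none⟩⟩
  have hall : ∀ a : Option T, (addLeaf t i₀).Reachable a (some i₀) := by
    intro a
    cases a with
    | none => exact (addLeaf_adj_none.mpr rfl).reachable
    | some i =>
      obtain ⟨p⟩ := ht.preconnected i i₀
      exact ⟨p.map (someHom t i₀)⟩
  intro a b
  exact (hall a).trans (hall b).symm

lemma addLeaf_strip {t : SimpleGraph T} {i₀ : T} :
    ∀ {x y : Option T} (p : (addLeaf t i₀).Walk x y), none ∉ p.support →
      ∀ {a b : T}, x = some a → y = some b →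
      ∃ q : t.Walk a b, q.support.map Option.some = p.support ∧
        q.edges.map (Sym2.map Option.some) = p.edges := by
  intro x y p
  induction p with
  | nil =>
    intro hn a b hx hy
    subst hx
    simp only [Option.some.injEq] at hy
    subst hy
    exact ⟨Walk.nil, by simp, by simp⟩
  | @cons x x₁ y h q ih =>
    intro hn a b hx hy
    subst hx
    obtain ⟨c, rfl⟩ : ∃ c, x₁ = some c := by
      cases x₁ with
      | none =>
        exfalso
        apply hn
        simp only [Walk.support_cons, List.mem_cons]
        exact Or.inr q.start_mem_support
      | some c => exact ⟨c, rfl⟩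
    have hadj : t.Adj a c := addLeaf_adj_some.mp h
    have hn' : none ∉ q.support := fun hq => hn (by
      simp only [Walk.support_cons, List.mem_cons]; exact Or.inr hq)
    obtain ⟨q', hs, he⟩ := ih hn' rfl hy
    refine ⟨Walk.cons hadj q', ?_, ?_⟩
    · simp [Walk.support_cons, hs]
    · simp [Walk.edges_cons, he]

lemma no_cycle_through_leaf {t : SimpleGraph T} {i₀ : T}
    (c' : (addLeaf t i₀).Walk none none) (hc' : c'.IsCycle) : False := by
  cases c' with
  | nil => exact Walk.IsCycle.not_of_nil hc'
  | @cons _ z _ h q =>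
    have hzi : z = some i₀ := addLeaf_adj_none.mp h
    subst hzi
    have h3 : 3 ≤ (Walk.cons h q).length := hc'.three_le_length
    rw [Walk.length_cons] at h3
    have hnd : q.support.Nodup := by
      have := hc'.support_nodup
      rwa [Walk.support_cons, List.tail_cons] at this
    have hqs : q.support = q.reverse.support.reverse := by
      rw [Walk.support_reverse, List.reverse_reverse]
    cases hrev : q.reverse with
    | @cons _ w _ h₂ r₂ =>
      have hwi : w = some i₀ := addLeaf_adj_none.mp h₂
      subst hwi
      have hr₂len : 1 ≤ r₂.length := by
        have hl : q.length = q.reverse.length := (Walk.length_reverse q).symm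
        rw [hrev, Walk.length_cons] at hl
        omega
      cases r₂ with
      | nil => simp at hr₂len
      | @cons _ z₃ _ h₃ r₃ =>
        have hdup : ¬ (Walk.cons h₃ r₃).support.Nodup := by
          rw [Walk.support_cons, List.nodup_cons]
          rintro ⟨hni, -⟩
          exact hni r₃.end_mem_support
        apply hdup
        have : q.support = (Walk.cons h₃ r₃).support.reverse ++ [none] := by
          rw [hqs, hrev, Walk.support_cons, List.reverse_cons]
        rw [this] at hnd
        have := (List.nodup_append.mp hnd).1
        exact List.nodup_reverse.mp this

lemma addLeaf_isTree {t : SimpleGraph T} (ht : t.IsTree) (i₀ : T) :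
    (addLeaf t i₀).IsTree := by
  classical
  constructor
  · exact addLeaf_connected ht.isConnected
  · intro v c hc
    by_cases hnone : none ∈ c.support
    · exact no_cycle_through_leaf (c.rotate none hnone) (hc.rotate hnone)
    · obtain ⟨a, rfl⟩ : ∃ a, v = some a := by
        cases v with
        | none => exact absurd c.start_mem_support hnone
        | some a => exact ⟨a, rfl⟩
      obtain ⟨q, hs, he⟩ := addLeaf_strip c hnone rfl rfl
      have hqlen : q.length = c.length := by
        have h1 : q.support.length = c.support.length := by rw [← hs, List.length_map]
        rw [Walk.length_support, Walk.length_support] at h1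
        omega
      have hq : q.IsCycle := by
        rw [Walk.isCycle_def]
        refine ⟨⟨?_⟩, ?_, ?_⟩
        · have := hc.edges_nodup
          rw [← he] at this
          exact this.of_map _
        · intro hqn
          have := hc.three_le_length
          rw [← hqlen, hqn, Walk.length_nil] at this
          omega
        · have := hc.support_nodup
          rw [← hs] at this
          have h2 : (q.support.map Option.some).tail = q.support.tail.map Option.some := by
            cases q.support with
            | nil => simp
            | cons hd tl => simp
          rw [h2] at this
          exact this.of_map _
      exact ht.IsAcyclic q hq

lemma edge_of_walk_from_none {t : SimpleGraph T} {i₀ : T} :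
    ∀ {y : Option T} (p : (addLeaf t i₀).Walk none y), y ≠ none →
      s(none, some i₀) ∈ p.edges := by
  intro y p
  cases p with
  | nil => exact fun h => absurd rfl h
  | @cons _ z _ h q =>
    intro _
    have hzi : z = some i₀ := addLeaf_adj_none.mp h
    subst hzi
    simp [Walk.edges_cons]

lemma none_not_in_path {t : SimpleGraph T} {i₀ : T} {i k : T}
    (p : (addLeaf t i₀).Walk (some i) (some k)) (hp : p.IsPath) : none ∉ p.support := by
  classical
  intro hn
  have hsplit := Walk.take_spec p hn
  have h1 : s(none, some i₀) ∈ (p.dropUntil none hn).edges :=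
    edge_of_walk_from_none _ (by simp)
  have h2 : s(none, some i₀) ∈ (p.takeUntil none hn).edges := by
    have := edge_of_walk_from_none (p.takeUntil none hn).reverse (by simp)
    rwa [Walk.edges_reverse, List.mem_reverse] at this
  have hnd : ((p.takeUntil none hn).edges ++ (p.dropUntil none hn).edges).Nodup := by
    have := hp.edges_nodup
    rw [← hsplit, Walk.edges_append] at this
    exact this
  exact (List.disjoint_of_nodup_append hnd) h2 h1

end AddLeaf

section CliqueTree
variable {V : Type}

def MaxClqIn (g : SimpleGraph V) (s : Set V) : Set (Set V) :=
  {C | C ⊆ s ∧ g.IsClique C ∧ ∀ C' : Set V, g.IsClique C' → C' ⊆ s → C ⊆ C' → C = C'}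

lemma unit_isTree : (⊥ : SimpleGraph Unit).IsTree := by
  constructor
  · rw [connected_iff]
    refine ⟨?_, ⟨()⟩⟩
    intro u v
    rw [Subsingleton.elim u v]
  · intro v c hc
    exact hc.ne_bot rfl

lemma empty_decomp_exists (g : SimpleGraph V) (s : Finset V) (hse : s = ∅) :
    ∃ d : TreeDecomp V,
      (∀ v ∈ s, ∃ i, v ∈ d.β i) ∧
      (∀ u v : V, u ∈ s → v ∈ s → g.Adj u v → ∃ i, u ∈ d.β i ∧ v ∈ d.β i) ∧
      (∀ (i j k : d.T) (p : d.tree.Walk i k), p.IsPath → j ∈ p.support →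
        d.β i ∩ d.β k ⊆ d.β j) ∧
      (∀ i, d.β i ∈ MaxClqIn g ↑s) := by
  subst hse
  refine ⟨⟨Unit, inferInstance, ⊥, unit_isTree, fun _ => ∅⟩, ?_, ?_, ?_, ?_⟩
  · intro v hv; simp at hv
  · intro u v hu; simp at hu
  · intro i j k p hp hj
    simp
  · intro i
    refine ⟨by simp, SimpleGraph.isClique_empty, ?_⟩
    intro C' _ hC's _
    have : C' = ∅ := Set.subset_empty_iff.mp (by simpa using hC's)
    rw [this]

lemma cliquetree_exists [Fintype V] {g : SimpleGraph V} (hg : IsChordal g) :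
    ∀ (n : ℕ) (s : Finset V), s.card ≤ n →
      ∃ d : TreeDecomp V,
        (∀ v ∈ s, ∃ i, v ∈ d.β i) ∧
        (∀ u v : V, u ∈ s → v ∈ s → g.Adj u v → ∃ i, u ∈ d.β i ∧ v ∈ d.β i) ∧
        (∀ (i j k : d.T) (p : d.tree.Walk i k), p.IsPath → j ∈ p.support →
          d.β i ∩ d.β k ⊆ d.β j) ∧
        (∀ i, d.β i ∈ MaxClqIn g ↑s) := by
  classical
  intro n
  induction n with
  | zero =>
    intro s hs
    exact empty_decomp_exists g s (Finset.card_eq_zero.mp (le_antisymm hs (Nat.zero_le _)))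
  | succ n ih =>
    intro s hs
    rcases s.eq_empty_or_nonempty with rfl | hne
    · exact empty_decomp_exists g ∅ rfl
    have hvex : ∃ v ∈ s, SimpIn g ↑s v := by
      rcases dirac hg (n + 1) s hs with hcomp | ⟨x, hx, _, _, _, _, hsx, -⟩
      · obtain ⟨a, ha⟩ := hne
        refine ⟨a, ha, Finset.mem_coe.mpr ha, ?_⟩
        intro u w hu hw _ _ hne'
        exact hcomp u (Finset.mem_coe.mp hu) w (Finset.mem_coe.mp hw) hne'
      · exact ⟨x, hx, hsx⟩
    obtain ⟨v, hvs, hvsimp⟩ := hvex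
    set s' := s.erase v with hs'def
    have hcard' : s'.card ≤ n := by
      rw [hs'def, Finset.card_erase_of_mem hvs]
      have := Finset.card_pos.mpr ⟨v, hvs⟩
      omega
    obtain ⟨d', hcov', hedge', hcoh', hbags'⟩ := ih s' hcard'
    set N : Set V := {u | u ∈ s ∧ g.Adj v u} with hNdef
    have hNs' : N ⊆ ↑s' := by
      intro u hu
      rw [hs'def]
      exact Finset.mem_coe.mpr (Finset.mem_erase.mpr ⟨hu.2.ne', hu.1⟩)
    have hNclq : g.IsClique N := by
      intro u hu w hw hne'
      exact hvsimp.2 (Finset.mem_coe.mpr hu.1) (Finset.mem_coe.mpr hw.1) hu.2 hw.2 hne'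
    obtain ⟨i₀, hi₀⟩ := clique_in_bag d' ↑s'
      (fun u hu => hcov' u (Finset.mem_coe.mp hu))
      (fun u w hu hw hadj => hedge' u w (Finset.mem_coe.mp hu) (Finset.mem_coe.mp hw) hadj)
      hcoh' N hNclq hNs'
    letI : Finite d'.T := d'.tFinite
    haveI : Fintype d'.T := Fintype.ofFinite d'.T
    haveI hfinopt : Finite (Option d'.T) := Finite.of_fintype _
    set βnew : Option d'.T → Set V :=
      fun o => Option.rec (N ∪ {v}) (fun i => if d'.β i = N then N ∪ {v} else d'.β i) o
      with hβnew
    have hvnotbag : ∀ i, v ∉ d'.β i := by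
      intro i hvi
      have := (hbags' i).1 hvi
      rw [hs'def] at this
      simp at this
    have hβ : ∀ (i : d'.T) (x : V),
        x ∈ βnew (some i) ↔ (x ∈ d'.β i ∨ (d'.β i = N ∧ x = v)) := by
      intro i x
      show x ∈ (if d'.β i = N then N ∪ {v} else d'.β i) ↔ _
      split_ifs with h
      · constructor
        · rintro (hx | hx)
          · exact Or.inl (h ▸ hx)
          · exact Or.inr ⟨h, hx⟩
        · rintro (hx | ⟨-, rfl⟩)
          · exact Or.inl (h ▸ (h ▸ hx : x ∈ N))
          · exact Or.inr rfl
      · constructor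
        · exact fun hx => Or.inl hx
        · rintro (hx | ⟨hN', rfl⟩)
          · exact hx
          · exact absurd hN' h
    have hβnone : ∀ x : V, x ∈ βnew none ↔ x ∈ N ∨ x = v := by
      intro x
      show x ∈ N ∪ {v} ↔ _
      simp only [Set.mem_union, Set.mem_singleton_iff]
    refine ⟨⟨Option d'.T, hfinopt, addLeaf d'.tree i₀, addLeaf_isTree d'.isTree i₀,
      βnew⟩, ?_, ?_, ?_, ?_⟩
    · -- vertex coverage
      intro u hu
      by_cases huv : u = v
      · exact ⟨none, (hβnone u).mpr (Or.inr huv)⟩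
      · obtain ⟨i, hi⟩ := hcov' u (Finset.mem_erase.mpr ⟨huv, hu⟩)
        exact ⟨some i, (hβ i u).mpr (Or.inl hi)⟩
    · -- edge coverage
      intro u w hu hw hadj
      by_cases huv : u = v
      · subst huv
        refine ⟨none, (hβnone u).mpr (Or.inr rfl), (hβnone w).mpr (Or.inl ⟨hw, hadj⟩)⟩
      · by_cases hwv : w = v
        · subst hwv
          refine ⟨none, (hβnone u).mpr (Or.inl ⟨hu, hadj.symm⟩), (hβnone w).mpr (Or.inr rfl)⟩
        · obtain ⟨i, hi1, hi2⟩ := hedge' u w (Finset.mem_erase.mpr ⟨huv, hu⟩)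
            (Finset.mem_erase.mpr ⟨hwv, hw⟩) hadj
          exact ⟨some i, (hβ i u).mpr (Or.inl hi1), (hβ i w).mpr (Or.inl hi2)⟩
    · -- coherence
      have hstep_some : ∀ (i' k' : d'.T) (p : (addLeaf d'.tree i₀).Walk (some i') (some k')),
          p.IsPath → ∀ j', some j' ∈ p.support →
          ∃ q₀ : d'.tree.Walk i' k', q₀.IsPath ∧ j' ∈ q₀.support := by
        intro i' k' p hp j' hj
        obtain ⟨q, hsq, -⟩ := addLeaf_strip p (none_not_in_path p hp) rfl rfl
        refine ⟨q, ?_, ?_⟩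
        · have hnd : q.support.Nodup := by
            have := hp.support_nodup
            rw [← hsq] at this
            exact this.of_map _
          exact Walk.IsPath.mk' hnd
        · rw [← hsq] at hj
          obtain ⟨j'', hj'', heq⟩ := List.mem_map.mp hj
          have : j'' = j' := Option.some_injective _ heq
          exact this ▸ hj''
      have hstep_none : ∀ (k' : d'.T) (p : (addLeaf d'.tree i₀).Walk none (some k')),
          p.IsPath → ∀ j', some j' ∈ p.support →
          ∃ q₀ : d'.tree.Walk i₀ k', q₀.IsPath ∧ j' ∈ q₀.support := by
        intro k' p hp j' hj
        cases p with
        | @cons _ z _ h q =>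
          have hzi : z = some i₀ := addLeaf_adj_none.mp h
          subst hzi
          have hq : q.IsPath := hp.of_cons
          have hj'q : some j' ∈ q.support := by
            rw [Walk.support_cons] at hj
            rcases List.mem_cons.mp hj with heq | h'
            · cases heq
            · exact h'
          exact hstep_some i₀ k' q hq j' hj'q
      have hmax : ∀ (i' j' : d'.T), d'.β i' = N → N ⊆ d'.β j' → d'.β j' = N := by
        intro i' j' hiN hsub
        have heq := (hbags' i').2.2 (d'.β j') (hbags' j').2.1 (hbags' j').1
          (by rw [hiN]; exact hsub)
        rw [← heq, hiN]
      -- the main case: i = none, k = some k'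
      have hcase : ∀ (k' : d'.T) (p : (addLeaf d'.tree i₀).Walk none (some k')),
          p.IsPath → ∀ j ∈ p.support, βnew none ∩ βnew (some k') ⊆ βnew j := by
        intro k' p hp j hj x hx
        obtain ⟨hx1, hx2⟩ := hx
        cases j with
        | none => exact hx1
        | some j' =>
          obtain ⟨q₀, hq₀, hj₀⟩ := hstep_none k' p hp j' hj
          by_cases hxv : x = v
          · subst hxv
            have hNk : d'.β k' = N := ((hβ k' x).mp hx2).elim
              (fun h => absurd h (hvnotbag k')) (fun h => h.1)
            refine (hβ j' x).mpr (Or.inr ⟨?_, rfl⟩)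
            refine hmax k' j' hNk ?_
            intro u hu
            exact hcoh' i₀ j' k' q₀ hq₀ hj₀ ⟨hi₀ hu, hNk ▸ hu⟩
          · have hxN : x ∈ N := ((hβnone x).mp hx1).resolve_right hxv
            have hxk : x ∈ d'.β k' := ((hβ k' x).mp hx2).resolve_right (fun h => hxv h.2)
            exact (hβ j' x).mpr (Or.inl (hcoh' i₀ j' k' q₀ hq₀ hj₀ ⟨hi₀ hxN, hxk⟩))
      intro i j k p hp hj
      match i, k with
      | none, none =>
        have hpnil := aux_loop_path_eq_nil p hp
        subst hpnil
        simp only [Walk.support_nil, List.mem_singleton] at hj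
        subst hj
        exact fun x hx => hx.1
      | none, some k' => exact hcase k' p hp j hj
      | some i', none =>
        intro x hx
        refine hcase i' p.reverse hp.reverse j ?_ ⟨hx.2, hx.1⟩
        rw [Walk.support_reverse, List.mem_reverse]
        exact hj
      | some i', some k' =>
        have hnone := none_not_in_path p hp
        obtain ⟨j', rfl⟩ : ∃ j', j = some j' := by
          cases j with
          | none => exact absurd hj hnone
          | some j' => exact ⟨j', rfl⟩
        obtain ⟨q₀, hq₀, hj₀⟩ := hstep_some i' k' p hp j' hj
        intro x hx
        obtain ⟨hx1, hx2⟩ := hx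
        by_cases hxv : x = v
        · subst hxv
          have hNi : d'.β i' = N := ((hβ i' x).mp hx1).elim
            (fun h => absurd h (hvnotbag i')) (fun h => h.1)
          have hNk : d'.β k' = N := ((hβ k' x).mp hx2).elim
            (fun h => absurd h (hvnotbag k')) (fun h => h.1)
          refine (hβ j' x).mpr (Or.inr ⟨?_, rfl⟩)
          refine hmax i' j' hNi ?_
          intro u hu
          exact hcoh' i' j' k' q₀ hq₀ hj₀ ⟨hNi ▸ hu, hNk ▸ hu⟩
        · have hxi : x ∈ d'.β i' := ((hβ i' x).mp hx1).resolve_right (fun h => hxv h.2)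
          have hxk : x ∈ d'.β k' := ((hβ k' x).mp hx2).resolve_right (fun h => hxv h.2)
          exact (hβ j' x).mpr (Or.inl (hcoh' i' j' k' q₀ hq₀ hj₀ ⟨hxi, hxk⟩))
    · -- bags are maximal cliques in s
      have hNvmax : (N ∪ {v}) ∈ MaxClqIn g ↑s := by
        refine ⟨?_, ?_, ?_⟩
        · rintro x (hx | rfl)
          · exact Finset.mem_coe.mpr hx.1
          · exact Finset.mem_coe.mpr hvs
        · rintro x (hx | rfl) y (hy | rfl) hne'
          · exact hvsimp.2 (Finset.mem_coe.mpr hx.1) (Finset.mem_coe.mpr hy.1) hx.2 hy.2 hne'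
          · exact hx.2.symm
          · exact hy.2
          · exact absurd rfl hne'
        · intro C' hclq hC's hsub
          apply Set.Subset.antisymm hsub
          intro u hu
          by_cases huv : u = v
          · exact Or.inr huv
          · refine Or.inl ⟨Finset.mem_coe.mp (hC's hu), ?_⟩
            exact hclq (hsub (Or.inr rfl)) hu (Ne.symm huv)
      have holdmax : ∀ i, d'.β i ≠ N → d'.β i ∈ MaxClqIn g ↑s := by
        intro i hiN
        obtain ⟨hsub', hclq', hmax'⟩ := hbags' i
        refine ⟨hsub'.trans ?_, hclq', ?_⟩
        · rw [hs'def]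
          exact Finset.coe_subset.mpr (Finset.erase_subset v s)
        · intro C' hclq hC's hsub
          by_cases hvC : v ∈ C'
          · exfalso
            apply hiN
            have hβN : d'.β i ⊆ N := by
              intro u hu
              have huC : u ∈ C' := hsub hu
              have hune : u ≠ v := fun h => hvnotbag i (h ▸ hu)
              exact ⟨Finset.mem_coe.mp (hC's huC), hclq hvC huC (Ne.symm hune)⟩
            exact hmax' N hNclq hNs' hβN
          · refine hmax' C' hclq ?_ hsub
            intro u hu
            rw [hs'def]
            exact Finset.mem_coe.mpr (Finset.mem_erase.mpr
              ⟨fun h => hvC (h ▸ hu), Finset.mem_coe.mp (hC's hu)⟩)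
      intro o
      cases o with
      | none => exact hNvmax
      | some i =>
        show (if d'.β i = N then N ∪ {v} else d'.β i) ∈ MaxClqIn g ↑s
        split_ifs with h
        · exact hNvmax
        · exact holdmax i h

end CliqueTree

/-- The bags of a proper tree decomposition of a chordal graph are exactly its
maximal cliques. -/
theorem proper_td_of_chordal_bags {V : Type} [Fintype V] (g : SimpleGraph V)
    (hg : IsChordal g) (d : TreeDecomp V) (hd : IsProperTD g d) :
    d.bags = MaxClq g := by
  classical
  obtain ⟨d', hcov', hedge', hcoh', hbags'⟩ :=
    cliquetree_exists hg (Finset.univ : Finset V).card (Finset.univ : Finset V) le_rfl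
  obtain ⟨hTD, hproper⟩ := hd
  obtain ⟨hcov, hedge, hcoh⟩ := hTD
  have hmax2max : ∀ C : Set V, C ∈ MaxClqIn g ↑(Finset.univ : Finset V) → C ∈ MaxClq g := by
    rintro C ⟨-, hclq, hmax⟩
    exact ⟨hclq, fun C' hC' hsub => hmax C' hC' (by simp) hsub⟩
  have hTD' : IsTD g d' := by
    refine ⟨fun u => hcov' u (Finset.mem_univ u), fun u w h => ?_, hcoh'⟩
    exact hedge' u w (Finset.mem_univ u) (Finset.mem_univ w) h
  have hsub : Subsumes d' d := by
    rintro b ⟨i, rfl⟩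
    obtain ⟨i₂, hsub⟩ := clique_in_bag d Set.univ (fun u _ => hcov u)
      (fun u w _ _ h => hedge u w h) hcoh (d'.β i) ((hbags' i).2.1) (Set.subset_univ _)
    exact ⟨d.β i₂, ⟨i₂, rfl⟩, hsub⟩
  have hbagsub : d.bags ⊆ d'.bags := by
    by_contra h
    exact hproper d' hTD' ⟨hsub, h⟩
  apply Set.Subset.antisymm
  · intro C hC
    obtain ⟨i, rfl⟩ := hbagsub hC
    exact hmax2max _ (hbags' i)
  · intro C hC
    obtain ⟨i₂, hCi⟩ := clique_in_bag d Set.univ (fun u _ => hcov u)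
      (fun u w _ _ h => hedge u w h) hcoh C hC.1 (Set.subset_univ _)
    have hbag : d.β i₂ ∈ d'.bags := hbagsub ⟨i₂, rfl⟩
    obtain ⟨i₃, heq⟩ := hbag
    have hclq : g.IsClique (d.β i₂) := heq ▸ (hbags' i₃).2.1
    have hCeq : C = d.β i₂ := hC.2 _ hclq hCi
    rw [hCeq]
    exact ⟨i₂, rfl⟩
end

section
/- Let g be a finite simple graph, let φ be a set of pairwise parallel minimal separators of g, and let g_t be a minimal triangulation of the graph g_[φ]. Then φ ⊆ MinSep(g_t); that is, every member of φ is a minimal separator of g_t. -/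
open SimpleGraph

/-- `S` is a `(u,v)`-separator of `g`: `u` and `v` lie in distinct connected
components of `g` with the vertices of `S` deleted. -/
def IsSep {V : Type} (g : SimpleGraph V) (u v : V) (S : Set V) : Prop :=
  ∃ (hu : u ∈ Sᶜ) (hv : v ∈ Sᶜ),
    ¬ (g.induce Sᶜ).Reachable ⟨u, hu⟩ ⟨v, hv⟩

/-- `S` is a minimal `(u,v)`-separator of `g`. -/
def IsMinSepPair {V : Type} (g : SimpleGraph V) (u v : V) (S : Set V) : Prop :=
  IsSep g u v S ∧ ∀ S' : Set V, S' ⊂ S → ¬ IsSep g u v S'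

/-- The set of minimal separators of `g`. -/
def MinSep {V : Type} (g : SimpleGraph V) : Set (Set V) :=
  {S | ∃ u v : V, IsMinSepPair g u v S}

/-- `S` crosses `T`. -/
def Crosses {V : Type} (g : SimpleGraph V) (S T : Set V) : Prop :=
  ∃ u ∈ T, ∃ v ∈ T, IsSep g u v S

/-- `φ` is a set of pairwise parallel (non-crossing) minimal separators of `g`. -/
def PairwiseParallel {V : Type} (g : SimpleGraph V) (φ : Set (Set V)) : Prop :=
  φ ⊆ MinSep g ∧ φ.Pairwise fun S T => ¬ Crosses g S T

/-- `φ` is a maximal set of pairwise parallel minimal separators of `g`. -/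
def MaxPairwiseParallel {V : Type} (g : SimpleGraph V) (φ : Set (Set V)) : Prop :=
  PairwiseParallel g φ ∧ ∀ ψ : Set (Set V), PairwiseParallel g ψ → φ ⊆ ψ → φ = ψ

/-- `g_[φ]`: the graph obtained from `g` by saturating every member of `φ`. -/
def satSet {V : Type} (g : SimpleGraph V) (φ : Set (Set V)) : SimpleGraph V where
  Adj u v := g.Adj u v ∨ (u ≠ v ∧ ∃ S ∈ φ, u ∈ S ∧ v ∈ S)
  symm := by
    constructor
    intro u v h
    rcases h with h | ⟨hne, S, hS, hu, hv⟩
    · exact Or.inl h.symm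
    · exact Or.inr ⟨hne.symm, S, hS, hv, hu⟩
  loopless := by
    constructor
    intro u h
    rcases h with h | ⟨hne, _⟩
    · exact g.loopless.irrefl u h
    · exact hne rfl

/-- The neighborhood of a set `U` of vertices: vertices outside `U` adjacent to `U`. -/
def nbhd {V : Type} (g : SimpleGraph V) (U : Set V) : Set V :=
  {v | v ∉ U ∧ ∃ u ∈ U, g.Adj u v}

/-- `c` is (the vertex set of) a connected component of `g − S`. -/
def IsCompOf {V : Type} (g : SimpleGraph V) (S : Set V) (c : Set V) : Prop :=
  c ⊆ Sᶜ ∧ (g.induce c).Connected ∧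
  ∀ u ∈ c, ∀ v : V, v ∉ S → g.Adj u v → v ∈ c

section ExtensionAux

variable {V : Type}

/-- Transfer reachability along a map sending edges to reachabilities. -/
lemma reach_of_walk_aux {W : Type} {α β : SimpleGraph W}
    (hab : ∀ x y : W, α.Adj x y → β.Reachable x y) {x y : W} (w : α.Walk x y) :
    β.Reachable x y := by
  induction w with
  | nil => exact SimpleGraph.Reachable.refl _
  | cons h p ih => exact (hab _ _ h).trans ih

lemma reach_of_reach_aux {W : Type} {α β : SimpleGraph W}
    (hab : ∀ x y : W, α.Adj x y → β.Reachable x y) {x y : W}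
    (hr : α.Reachable x y) : β.Reachable x y := by
  obtain ⟨w⟩ := hr
  exact reach_of_walk_aux hab w

/-- `gt` with all edges removed that join two distinct connected components
of `h − S`. -/
def cutG (gt h : SimpleGraph V) (S : Set V) : SimpleGraph V where
  Adj x y := gt.Adj x y ∧ (x ∈ S ∨ y ∈ S ∨
    ∃ (hx : x ∈ Sᶜ) (hy : y ∈ Sᶜ), (h.induce Sᶜ).Reachable ⟨x, hx⟩ ⟨y, hy⟩)
  symm := by
    constructor
    rintro x y ⟨ha, hc⟩
    refine ⟨ha.symm, ?_⟩
    rcases hc with h1 | h1 | ⟨hx, hy, hr⟩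
    · exact Or.inr (Or.inl h1)
    · exact Or.inl h1
    · exact Or.inr (Or.inr ⟨hy, hx, hr.symm⟩)
  loopless := ⟨fun x hx => gt.loopless.irrefl x hx.1⟩

lemma cutG_le (gt h : SimpleGraph V) (S : Set V) : cutG gt h S ≤ gt :=
  fun _ _ hxy => hxy.1

lemma le_cutG {gt h : SimpleGraph V} {S : Set V} (hle : h ≤ gt) :
    h ≤ cutG gt h S := by
  intro x y hxy
  refine ⟨hle hxy, ?_⟩
  by_cases hxS : x ∈ S
  · exact Or.inl hxS
  by_cases hyS : y ∈ S
  · exact Or.inr (Or.inl hyS)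
  · exact Or.inr (Or.inr ⟨hxS, hyS,
      SimpleGraph.Adj.reachable (show (h.induce Sᶜ).Adj ⟨x, hxS⟩ ⟨y, hyS⟩ from hxy)⟩)

/-- A walk in `cutG gt h S` avoiding `S` stays in a single component of `h − S`. -/
lemma cutG_walk_avoid {gt h : SimpleGraph V} {S : Set V} {x y : V}
    (w : (cutG gt h S).Walk x y) :
    (∀ z ∈ w.support, z ∉ S) →
    ∃ (hx : x ∈ Sᶜ) (hy : y ∈ Sᶜ), (h.induce Sᶜ).Reachable ⟨x, hx⟩ ⟨y, hy⟩ := by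
  induction w with
  | nil =>
    intro hall
    simp only [SimpleGraph.Walk.support_nil, List.mem_singleton] at hall
    exact ⟨hall _ rfl, hall _ rfl, SimpleGraph.Reachable.refl _⟩
  | @cons u v z hadj p ih =>
    intro hall
    have hu : u ∉ S := hall u (by simp)
    have hv : v ∉ S := hall v (by simp)
    obtain ⟨hv', hy, r2⟩ := ih (fun t ht => hall t (by simp [ht]))
    rcases hadj.2 with h1 | h1 | ⟨ha, hb, r1⟩
    · exact absurd h1 hu
    · exact absurd h1 hv
    · exact ⟨ha, hy, r1.trans r2⟩

/-- Any walk in `cutG gt h S` between vertices in distinct components of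
`h − S` meets `S`. -/
lemma cutG_walk_meets {gt h : SimpleGraph V} {S : Set V} {x y : V}
    (w : (cutG gt h S).Walk x y) (hx : x ∉ S) (hy : y ∉ S)
    (hnr : ¬ (h.induce Sᶜ).Reachable ⟨x, hx⟩ ⟨y, hy⟩) :
    ∃ z ∈ w.support, z ∈ S := by
  by_contra hcon
  push_neg at hcon
  obtain ⟨hx', hy', hr⟩ := cutG_walk_avoid w hcon
  exact hnr hr

/-- Gluing chordal graphs along a clique is chordal: `cutG gt h S` is chordal
whenever `gt` is chordal and `S` is a clique of `h ≤ gt`. -/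
lemma cutG_chordal {gt h : SimpleGraph V} {S : Set V}
    (hclique : ∀ s1 s2 : V, s1 ∈ S → s2 ∈ S → s1 ≠ s2 → h.Adj s1 s2)
    (hle : h ≤ gt) (hch : IsChordal gt) : IsChordal (cutG gt h S) := by
  classical
  intro v c hc hlen
  have hcle : cutG gt h S ≤ gt := cutG_le gt h S
  obtain ⟨a, b, ha, hb, hadj, hne⟩ :=
    hch v (c.mapLe hcle) (hc.mapLe hcle) (by rwa [SimpleGraph.Walk.length_map])
  have hid : ⇑(SimpleGraph.Hom.ofLE hcle) = id := rfl
  have hsupp : (c.mapLe hcle).support = c.support := by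
    rw [SimpleGraph.Walk.mapLe, SimpleGraph.Walk.support_map, hid, List.map_id]
  have hedges : (c.mapLe hcle).edges = c.edges := by
    rw [SimpleGraph.Walk.mapLe, SimpleGraph.Walk.edges_map, hid, Sym2.map_id, List.map_id]
  rw [hsupp] at ha hb
  rw [hedges] at hne
  by_cases hcase : a ∈ S ∨ b ∈ S ∨
      ∃ (hx : a ∈ Sᶜ) (hy : b ∈ Sᶜ), (h.induce Sᶜ).Reachable ⟨a, hx⟩ ⟨b, hy⟩
  · exact ⟨a, b, ha, hb, ⟨hadj, hcase⟩, hne⟩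
  · push_neg at hcase
    obtain ⟨haS, hbS, hnr⟩ := hcase
    have hba : b ≠ a := hadj.ne'
    -- rotate the cycle to start at `a`
    set c' := c.rotate a ha with hc'def
    have hc' : c'.IsCycle := hc.rotate ha
    have htailperm := SimpleGraph.Walk.support_rotate c a ha
    have hedgeperm := SimpleGraph.Walk.rotate_edges c a ha
    have hbtail : b ∈ c.support.tail := by
      rcases List.mem_cons.mp ((SimpleGraph.Walk.support_eq_cons c) ▸ hb) with hbv | hbt
      · -- b = v : show v ∈ c.support.tail
        subst hbv
        cases c with
        | nil => exact absurd rfl hc.ne_nil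
        | cons h' p => simp [SimpleGraph.Walk.end_mem_support]
      · exact hbt
    have hbc' : b ∈ c'.support := by
      rw [SimpleGraph.Walk.support_eq_cons c']
      exact List.mem_cons_of_mem _ (htailperm.mem_iff.mpr hbtail)
    set p := c'.takeUntil b hbc' with hpdef
    set q := c'.dropUntil b hbc' with hqdef
    have hpq : p.append q = c' := SimpleGraph.Walk.take_spec c' hbc'
    -- decompose the tail of the support
    have htail : c'.support.tail = p.support.tail ++ q.support.tail := by
      rw [← hpq, SimpleGraph.Walk.tail_support_append]
    have hnd : (p.support.tail ++ q.support.tail).Nodup := by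
      rw [← htail]; exact hc'.support_nodup
    rw [List.nodup_append] at hnd
    have hdisj := hnd.2.2
    -- find S-vertices on each half
    obtain ⟨s1, hs1p, hs1S⟩ := cutG_walk_meets p haS hbS (hnr haS hbS)
    obtain ⟨s2, hs2q, hs2S⟩ := cutG_walk_meets q hbS haS (fun hr => hnr haS hbS hr.symm)
    have hs1a : s1 ≠ a := fun e => haS (e ▸ hs1S)
    have hs1b : s1 ≠ b := fun e => hbS (e ▸ hs1S)
    have hs2a : s2 ≠ a := fun e => haS (e ▸ hs2S)
    have hs2b : s2 ≠ b := fun e => hbS (e ▸ hs2S)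
    have hs1tail : s1 ∈ p.support.tail := by
      rcases List.mem_cons.mp ((SimpleGraph.Walk.support_eq_cons p) ▸ hs1p) with e | ht
      · exact absurd e hs1a
      · exact ht
    have hs2tail : s2 ∈ q.support.tail := by
      rcases List.mem_cons.mp ((SimpleGraph.Walk.support_eq_cons q) ▸ hs2q) with e | ht
      · exact absurd e hs2b
      · exact ht
    have hs12 : s1 ≠ s2 := fun e => hdisj s1 hs1tail s2 hs2tail e
    -- membership in the support of `c`
    have hmemc : ∀ s : V, s ∈ c'.support.tail → s ∈ c.support := by
      intro s hs
      have : s ∈ c.support.tail := htailperm.mem_iff.mp hs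
      rw [SimpleGraph.Walk.support_eq_cons c]
      exact List.mem_cons_of_mem _ this
    have hs1c : s1 ∈ c.support := hmemc s1 (htail ▸ List.mem_append_left _ hs1tail)
    have hs2c : s2 ∈ c.support := hmemc s2 (htail ▸ List.mem_append_right _ hs2tail)
    -- the chord `s(s1, s2)` is not an edge of the cycle
    have hchordne : s(s1, s2) ∉ c.edges := by
      intro hmem
      have hmem' : s(s1, s2) ∈ c'.edges := (hedgeperm.mem_iff).mpr hmem
      rw [← hpq, SimpleGraph.Walk.edges_append, List.mem_append] at hmem'
      rcases hmem' with hp | hq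
      · have hs2p : s2 ∈ p.support := SimpleGraph.Walk.snd_mem_support_of_mem_edges p hp
        rcases List.mem_cons.mp ((SimpleGraph.Walk.support_eq_cons p) ▸ hs2p) with e | ht
        · exact hs2a e
        · exact hdisj s2 ht s2 hs2tail rfl
      · have hs1q : s1 ∈ q.support := SimpleGraph.Walk.fst_mem_support_of_mem_edges q hq
        rcases List.mem_cons.mp ((SimpleGraph.Walk.support_eq_cons q) ▸ hs1q) with e | ht
        · exact hs1b e
        · exact hdisj s1 hs1tail s1 ht rfl
    exact ⟨s1, s2, hs1c, hs2c, le_cutG hle (hclique s1 s2 hs1S hs2S hs12), hchordne⟩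

end ExtensionAux

/-- If `φ` is a set of pairwise parallel minimal separators of `g` and `g_t` is a
minimal triangulation of `g_[φ]`, then every member of `φ` is a minimal separator
of `g_t`. -/
theorem extension_lemma {V : Type} [Fintype V] (g : SimpleGraph V)
    (φ : Set (Set V)) (hφ : PairwiseParallel g φ)
    (gt : SimpleGraph V) (hgt : gt ∈ MinTri (satSet g φ)) :
    φ ⊆ MinSep gt := by
  intro S hS
  obtain ⟨u, v, ⟨⟨hu, hv, hnr⟩, hmin⟩⟩ := hφ.1 hS
  set h := satSet g φ with hhdef
  have hle : g ≤ h := fun x y hxy => Or.inl hxy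
  have hhgt : h ≤ gt := hgt.1
  -- Step 1: `S` still separates `u` and `v` in `h = satSet g φ`.
  have hkey : ∀ x y : ↑Sᶜ, (h.induce Sᶜ).Adj x y → (g.induce Sᶜ).Reachable x y := by
    rintro ⟨x, hx⟩ ⟨y, hy⟩ hxy
    rcases (show h.Adj x y from hxy) with hg | ⟨hne, T, hT, hxT, hyT⟩
    · exact SimpleGraph.Adj.reachable (show (g.induce Sᶜ).Adj ⟨x, hx⟩ ⟨y, hy⟩ from hg)
    · by_cases hTS : T = S
      · exact absurd (hTS ▸ hxT) hx
      · have hpar : ¬ Crosses g S T := hφ.2 hS hT (fun e => hTS e.symm)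
        have hnsep : ¬ IsSep g x y S := fun hsep => hpar ⟨x, hxT, y, hyT, hsep⟩
        rw [IsSep] at hnsep
        push_neg at hnsep
        exact hnsep hx hy
  have hnrh : ¬ (h.induce Sᶜ).Reachable ⟨u, hu⟩ ⟨v, hv⟩ :=
    fun hr => hnr (reach_of_reach_aux hkey hr)
  -- Step 2: `S` is a clique in `h`.
  have hclique : ∀ s1 s2 : V, s1 ∈ S → s2 ∈ S → s1 ≠ s2 → h.Adj s1 s2 :=
    fun s1 s2 h1 h2 hne => Or.inr ⟨hne, S, hS, h1, h2⟩
  -- Step 3: `gt ≤ cutG gt h S` by minimality of the triangulation.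
  have hgtcut : gt ≤ cutG gt h S := by
    by_contra hcon
    have hlt : cutG gt h S < gt := lt_of_le_of_ne (cutG_le gt h S)
      (fun e => hcon (le_of_eq e.symm))
    exact hgt.2.2 (cutG gt h S) (le_cutG hhgt) hlt
      (cutG_chordal hclique hhgt hgt.2.1)
  -- Step 4: conclude `S` separates `u` and `v` in `gt`.
  have hsep_gt : IsSep gt u v S := by
    refine ⟨hu, hv, fun hr => hnrh ?_⟩
    refine reach_of_reach_aux (α := gt.induce Sᶜ) ?_ hr
    rintro ⟨x, hx⟩ ⟨y, hy⟩ hxy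
    have hcut : (cutG gt h S).Adj x y := hgtcut (show gt.Adj x y from hxy)
    rcases hcut.2 with h1 | h1 | ⟨hx', hy', hr'⟩
    · exact absurd h1 hx
    · exact absurd h1 hy
    · exact hr'
  -- Step 5: minimality transfers by monotonicity.
  refine ⟨u, v, hsep_gt, ?_⟩
  intro S' hS' hsep'
  apply hmin S' hS'
  obtain ⟨hu', hv', hnr'⟩ := hsep'
  refine ⟨hu', hv', fun hr => hnr' ?_⟩
  exact hr.mono (fun x y hxy =>
    show gt.Adj x.1 y.1 from hhgt (hle (show g.Adj x.1 y.1 from hxy)))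
end
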